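/- arXiv:1201.1411 — 3 statements merged into one kernel-verified Lean document; each statement's English description precedes it below -/
import Mathlib

section
/- For n ≥ 3, the number λ⁺_{n,2} of n×n binary matrices with exactly two 1's in each row and column and a 1 in the bottom-right entry satisfies λ⁺_{n,2} = 2(n-1)·λ_{n-1,2} + (n-1)²·λ_{n-2,2}, where λ_{m,2} is the number of m×m binary matrices with exactly two 1's in each row and column. -/
def isLambda (n k : ℕ) (A : Fin n → Fin n → Bool) : Prop :=
  (∀ i : Fin n, (Finset.univ.filter fun j => A i j = true).card = k) ∧
  (∀ j : Fin n, (Finset.univ.filter fun i => A i j = true).card = k)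

noncomputable def lam (n k : ℕ) : ℕ :=
  Nat.card {A : Fin n → Fin n → Bool // isLambda n k A}

def lastIdx (n : ℕ) (h : 0 < n) : Fin n := ⟨n - 1, Nat.sub_lt h one_pos⟩

noncomputable def lamPos (n k : ℕ) (h : 0 < n) : ℕ :=
  Nat.card {A : Fin n → Fin n → Bool //
    isLambda n k A ∧ A (lastIdx n h) (lastIdx n h) = true}

noncomputable def lamNeg (n k : ℕ) (h : 0 < n) : ℕ :=
  Nat.card {A : Fin n → Fin n → Bool //
    isLambda n k A ∧ A (lastIdx n h) (lastIdx n h) = false}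


open Finset

namespace LamAux

/-- generic: boolean equals decide of an iff -/
lemma bool_eq_decide {b : Bool} {P : Prop} [Decidable P] (h : b = true ↔ P) : b = decide P := by
  cases b <;> simp_all

lemma card_filter_succAbove {m : ℕ} (f : Fin (m+1) → Bool) (x : Fin (m+1)) :
    (univ.filter fun j => f j = true).card
      = (if f x = true then 1 else 0)
        + (univ.filter fun c : Fin m => f (x.succAbove c) = true).card := by
  rw [Finset.card_filter, Finset.card_filter, Fin.sum_univ_succAbove _ x]

lemma card_filter_castSucc {m : ℕ} (f : Fin (m+1) → Bool) :
    (univ.filter fun j => f j = true).card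
      = (univ.filter fun c : Fin m => f c.castSucc = true).card
        + (if f (Fin.last m) = true then 1 else 0) := by
  rw [Finset.card_filter, Finset.card_filter, Fin.sum_univ_castSucc]

lemma card_filter_decide_eq {m : ℕ} (j0 : Fin m) :
    (univ.filter fun j : Fin m => decide (j = j0) = true).card = 1 := by
  simp [Finset.filter_eq']

/-- characterization of a boolean row with exactly two trues, one of them at `last` -/
lemma char_pair {m : ℕ} (f : Fin (m+1) → Bool)
    (hc : (univ.filter fun j => f j = true).card = 2)
    (hl : f (Fin.last m) = true) :
    ∃ j0 : Fin m, ∀ x, f x = true ↔ (x = Fin.last m ∨ x = Fin.castSucc j0) := by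
  set F := univ.filter fun j => f j = true with hF
  have hmem : ∀ x, x ∈ F ↔ f x = true := by intro x; simp [hF]
  have hlmem : Fin.last m ∈ F := (hmem _).2 hl
  have h1 : (F.erase (Fin.last m)).card = 1 := by
    rw [Finset.card_erase_of_mem hlmem, hc]
  obtain ⟨a, ha⟩ := Finset.card_eq_one.mp h1
  have hane : a ≠ Fin.last m := by
    have : a ∈ F.erase (Fin.last m) := by rw [ha]; exact Finset.mem_singleton_self a
    exact (Finset.mem_erase.mp this).1
  obtain ⟨j0, hj0⟩ := Fin.exists_castSucc_eq.mpr hane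
  refine ⟨j0, fun x => ?_⟩
  constructor
  · intro hx
    rcases eq_or_ne x (Fin.last m) with h | h
    · exact Or.inl h
    · right
      have : x ∈ F.erase (Fin.last m) := Finset.mem_erase.mpr ⟨h, (hmem x).2 hx⟩
      rw [ha, Finset.mem_singleton] at this
      rw [this, hj0]
  · rintro (rfl | rfl)
    · exact hl
    · have ha' : a ∈ F.erase (Fin.last m) := by
        rw [ha]; exact Finset.mem_singleton_self a
      have : a ∈ F := Finset.mem_of_mem_erase ha'
      rw [← hj0] at this
      exact (hmem _).1 this

variable {p : ℕ}

/-- Build an (p+2)×(p+2) matrix from border data (i0, j0) and an inner (p+1)×(p+1) matrix. -/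
def mk (i0 j0 : Fin (p+1)) (inner : Fin (p+1) → Fin (p+1) → Bool) :
    Fin (p+2) → Fin (p+2) → Bool := fun i j =>
  if hi : i = Fin.last (p+1) then decide (j = Fin.last (p+1) ∨ j = Fin.castSucc j0)
  else if hj : j = Fin.last (p+1) then decide (i.castPred hi = i0)
  else inner (i.castPred hi) (j.castPred hj)

@[simp] lemma mk_last_last (i0 j0 : Fin (p+1)) (inner) :
    mk i0 j0 inner (Fin.last (p+1)) (Fin.last (p+1)) = true := by
  simp [mk]

@[simp] lemma mk_last_castSucc (i0 j0 : Fin (p+1)) (inner) (j : Fin (p+1)) :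
    mk i0 j0 inner (Fin.last (p+1)) (Fin.castSucc j) = decide (j = j0) := by
  simp [mk, (Fin.castSucc_lt_last j).ne, Fin.castSucc_inj]

@[simp] lemma mk_castSucc_last (i0 j0 : Fin (p+1)) (inner) (i : Fin (p+1)) :
    mk i0 j0 inner (Fin.castSucc i) (Fin.last (p+1)) = decide (i = i0) := by
  simp [mk, (Fin.castSucc_lt_last i).ne]
  congr

@[simp] lemma mk_castSucc_castSucc (i0 j0 : Fin (p+1)) (inner) (i j : Fin (p+1)) :
    mk i0 j0 inner (Fin.castSucc i) (Fin.castSucc j) = inner i j := by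
  simp [mk, (Fin.castSucc_lt_last i).ne, (Fin.castSucc_lt_last j).ne]

lemma mk_isLambda_iff (i0 j0 : Fin (p+1)) (inner) :
    isLambda (p+2) 2 (mk i0 j0 inner) ↔
      ((∀ i, (univ.filter fun j => inner i j = true).card = if i = i0 then 1 else 2) ∧
       (∀ j, (univ.filter fun i => inner i j = true).card = if j = j0 then 1 else 2)) := by
  have hrow : ∀ i : Fin (p+1),
      (univ.filter fun j : Fin (p+2) => mk i0 j0 inner (Fin.castSucc i) j = true).card
        = (univ.filter fun c => inner i c = true).card + (if i = i0 then 1 else 0) := by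
    intro i
    rw [card_filter_castSucc]
    simp only [mk_castSucc_castSucc, mk_castSucc_last, decide_eq_true_eq]
  have hrowlast :
      (univ.filter fun j : Fin (p+2) => mk i0 j0 inner (Fin.last (p+1)) j = true).card = 2 := by
    rw [card_filter_castSucc]
    simp only [mk_last_castSucc, mk_last_last, if_pos rfl]
    rw [card_filter_decide_eq]
    simp
  have hcol : ∀ j : Fin (p+1),
      (univ.filter fun i : Fin (p+2) => mk i0 j0 inner i (Fin.castSucc j) = true).card
        = (univ.filter fun c => inner c j = true).card + (if j = j0 then 1 else 0) := by
    intro j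
    rw [card_filter_castSucc (f := fun i => mk i0 j0 inner i (Fin.castSucc j))]
    simp only [mk_castSucc_castSucc, mk_last_castSucc, decide_eq_true_eq]
  have hcollast :
      (univ.filter fun i : Fin (p+2) => mk i0 j0 inner i (Fin.last (p+1)) = true).card = 2 := by
    rw [card_filter_castSucc (f := fun i => mk i0 j0 inner i (Fin.last (p+1)))]
    simp only [mk_castSucc_last, mk_last_last, if_pos rfl]
    rw [card_filter_decide_eq]
    simp
  constructor
  · rintro ⟨hr, hc⟩
    constructor
    · intro i
      have := hr (Fin.castSucc i)
      rw [hrow i] at this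
      split_ifs at this ⊢ with h <;> omega
    · intro j
      have := hc (Fin.castSucc j)
      rw [hcol j] at this
      split_ifs at this ⊢ with h <;> omega
  · rintro ⟨hr, hc⟩
    constructor
    · intro i
      induction i using Fin.lastCases with
      | last => exact hrowlast
      | cast i =>
        rw [hrow i]
        have := hr i
        split_ifs at this ⊢ with h <;> omega
    · intro j
      induction j using Fin.lastCases with
      | last => exact hcollast
      | cast j =>
        rw [hcol j]
        have := hc j
        split_ifs at this ⊢ with h <;> omega

/-- inner matrix for the case where the two extra ones form a "non-aligned" pattern:
  take `B` of size p+1 with a one at `(i0,j0)` and delete that one. -/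
def innerInl (B : Fin (p+1) → Fin (p+1) → Bool) (i0 j0 : Fin (p+1)) :
    Fin (p+1) → Fin (p+1) → Bool := fun i j =>
  if i = i0 ∧ j = j0 then false else B i j

/-- inner matrix for the aligned case: row i0 has a one only at j0, column j0 only at i0,
  and the rest is `C` of size `p` embedded via `succAbove`. -/
def innerInr (C : Fin p → Fin p → Bool) (i0 j0 : Fin (p+1)) :
    Fin (p+1) → Fin (p+1) → Bool := fun i j =>
  match finSuccEquiv' i0 i, finSuccEquiv' j0 j with
  | none, none => true
  | none, some _ => false
  | some _, none => false
  | some r, some c => C r c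

@[simp] lemma innerInr_self_self (C : Fin p → Fin p → Bool) (i0 j0 : Fin (p+1)) :
    innerInr C i0 j0 i0 j0 = true := by
  simp [innerInr, finSuccEquiv'_at]

@[simp] lemma innerInr_self_succAbove (C : Fin p → Fin p → Bool) (i0 j0 : Fin (p+1)) (c : Fin p) :
    innerInr C i0 j0 i0 (j0.succAbove c) = false := by
  simp [innerInr, finSuccEquiv'_at, finSuccEquiv'_succAbove]

@[simp] lemma innerInr_succAbove_self (C : Fin p → Fin p → Bool) (i0 j0 : Fin (p+1)) (r : Fin p) :
    innerInr C i0 j0 (i0.succAbove r) j0 = false := by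
  simp [innerInr, finSuccEquiv'_at, finSuccEquiv'_succAbove]

@[simp] lemma innerInr_succAbove_succAbove (C : Fin p → Fin p → Bool) (i0 j0 : Fin (p+1))
    (r c : Fin p) : innerInr C i0 j0 (i0.succAbove r) (j0.succAbove c) = C r c := by
  simp [innerInr, finSuccEquiv'_succAbove]




@[simp] lemma innerInl_self (B : Fin (p+1) → Fin (p+1) → Bool) (i0 j0 : Fin (p+1)) :
    innerInl B i0 j0 i0 j0 = false := by simp [innerInl]

@[simp] lemma innerInl_sa_right (B : Fin (p+1) → Fin (p+1) → Bool) (i0 j0 i : Fin (p+1))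
    (c : Fin p) : innerInl B i0 j0 i (j0.succAbove c) = B i (j0.succAbove c) := by
  simp only [innerInl]
  rw [if_neg (fun hc => Fin.succAbove_ne j0 c hc.2)]

@[simp] lemma innerInl_sa_left (B : Fin (p+1) → Fin (p+1) → Bool) (i0 j0 j : Fin (p+1))
    (r : Fin p) : innerInl B i0 j0 (i0.succAbove r) j = B (i0.succAbove r) j := by
  simp only [innerInl]
  rw [if_neg (fun hc => Fin.succAbove_ne i0 r hc.1)]

lemma row_innerInl (B : Fin (p+1) → Fin (p+1) → Bool) (i0 j0 : Fin (p+1))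
    (hrow : (univ.filter fun j => B i0 j = true).card = 2) (h1 : B i0 j0 = true) :
    (univ.filter fun j => innerInl B i0 j0 i0 j = true).card = 1 := by
  rw [card_filter_succAbove (fun j => innerInl B i0 j0 i0 j) j0]
  rw [card_filter_succAbove (fun j => B i0 j) j0, h1] at hrow
  simp only [innerInl_self, innerInl_sa_right, Bool.false_eq_true, if_false, zero_add,
    eq_self_iff_true, if_true] at *
  omega

lemma col_innerInl (B : Fin (p+1) → Fin (p+1) → Bool) (i0 j0 : Fin (p+1))
    (hcol : (univ.filter fun i => B i j0 = true).card = 2) (h1 : B i0 j0 = true) :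
    (univ.filter fun i => innerInl B i0 j0 i j0 = true).card = 1 := by
  rw [card_filter_succAbove (fun i => innerInl B i0 j0 i j0) i0]
  rw [card_filter_succAbove (fun i => B i j0) i0, h1] at hcol
  simp only [innerInl_self, innerInl_sa_left, Bool.false_eq_true, if_false, zero_add,
    eq_self_iff_true, if_true] at *
  omega

lemma isLambda_mk_innerInl (B : Fin (p+1) → Fin (p+1) → Bool) (i0 j0 : Fin (p+1))
    (hB : isLambda (p+1) 2 B) (h1 : B i0 j0 = true) :
    isLambda (p+2) 2 (mk i0 j0 (innerInl B i0 j0)) := by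
  rw [mk_isLambda_iff]
  constructor
  · intro i
    rcases eq_or_ne i i0 with heq | h
    · rw [if_pos heq, heq]
      exact row_innerInl B i0 j0 (hB.1 i0) h1
    · rw [if_neg h]
      have : (univ.filter fun j => innerInl B i0 j0 i j = true)
          = univ.filter fun j => B i j = true := by
        apply Finset.filter_congr
        intro j _
        simp only [innerInl]
        rw [if_neg (fun hc => h hc.1)]
      rw [this]
      exact hB.1 i
  · intro j
    rcases eq_or_ne j j0 with heq | h
    · rw [if_pos heq, heq]
      exact col_innerInl B i0 j0 (hB.2 j0) h1
    · rw [if_neg h]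
      have : (univ.filter fun i => innerInl B i0 j0 i j = true)
          = univ.filter fun i => B i j = true := by
        apply Finset.filter_congr
        intro i _
        simp only [innerInl]
        rw [if_neg (fun hc => h hc.2)]
      rw [this]
      exact hB.2 j

lemma isLambda_mk_innerInr (C : Fin p → Fin p → Bool) (i0 j0 : Fin (p+1))
    (hC : isLambda p 2 C) :
    isLambda (p+2) 2 (mk i0 j0 (innerInr C i0 j0)) := by
  rw [mk_isLambda_iff]
  constructor
  · intro i
    rcases eq_or_ne i i0 with heq | h
    · rw [if_pos heq, heq]
      rw [card_filter_succAbove (fun j => innerInr C i0 j0 i0 j) j0]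
      simp
    · obtain ⟨r, rfl⟩ := Fin.exists_succAbove_eq h
      rw [if_neg h]
      rw [card_filter_succAbove (fun j => innerInr C i0 j0 (i0.succAbove r) j) j0]
      simp only [innerInr_succAbove_self, innerInr_succAbove_succAbove, Bool.false_eq_true,
        if_false, zero_add]
      exact hC.1 r
  · intro j
    rcases eq_or_ne j j0 with heq | h
    · rw [if_pos heq, heq]
      rw [card_filter_succAbove (fun i => innerInr C i0 j0 i j0) i0]
      simp
    · obtain ⟨c, rfl⟩ := Fin.exists_succAbove_eq h
      rw [if_neg h]
      rw [card_filter_succAbove (fun i => innerInr C i0 j0 i (j0.succAbove c)) i0]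
      simp only [innerInr_self_succAbove, innerInr_succAbove_succAbove, Bool.false_eq_true,
        if_false, zero_add]
      exact hC.2 c

/-- the target types of the bijection -/
abbrev Tl (p : ℕ) := Σ B : {B : Fin (p+1) → Fin (p+1) → Bool // isLambda (p+1) 2 B},
    {e : Fin (p+1) × Fin (p+1) // B.1 e.1 e.2 = true}

abbrev Tr (p : ℕ) := Fin (p+1) × Fin (p+1) × {C : Fin p → Fin p → Bool // isLambda p 2 C}

abbrev SP (p : ℕ) := {A : Fin (p+2) → Fin (p+2) → Bool //
    isLambda (p+2) 2 A ∧ A (Fin.last (p+1)) (Fin.last (p+1)) = true}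

def psi : Tl p ⊕ Tr p → SP p
  | .inl ⟨B, e, he⟩ =>
      ⟨mk e.1 e.2 (innerInl B.1 e.1 e.2),
        isLambda_mk_innerInl B.1 e.1 e.2 B.2 he, mk_last_last _ _ _⟩
  | .inr ⟨i0, j0, C⟩ =>
      ⟨mk i0 j0 (innerInr C.1 i0 j0),
        isLambda_mk_innerInr C.1 i0 j0 C.2, mk_last_last _ _ _⟩

lemma mk_inj {i0 j0 i0' j0' : Fin (p+1)} {inn inn'}
    (h : mk i0 j0 inn = mk i0' j0' inn') : i0 = i0' ∧ j0 = j0' ∧ inn = inn' := by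
  have hj : j0 = j0' := by
    have := congrFun (congrFun h (Fin.last (p+1))) (Fin.castSucc j0)
    simpa using this
  have hi : i0 = i0' := by
    have := congrFun (congrFun h (Fin.castSucc i0)) (Fin.last (p+1))
    simpa using this
  refine ⟨hi, hj, ?_⟩
  funext i j
  have := congrFun (congrFun h (Fin.castSucc i)) (Fin.castSucc j)
  simpa using this

lemma psi_inj : Function.Injective (psi (p := p)) := by
  rintro (⟨B, e, he⟩ | ⟨i0, j0, C⟩) (⟨B', e', he'⟩ | ⟨i0', j0', C'⟩) h <;>
    obtain ⟨hi, hj, hinn⟩ := mk_inj (congrArg Subtype.val h : _)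
  · -- inl inl
    obtain ⟨i0, j0⟩ := e
    obtain ⟨i0', j0'⟩ := e'
    dsimp at hi hj hinn he he'
    subst hi; subst hj
    have hBB : B = B' := by
      apply Subtype.ext
      funext i j
      have h2 := congrFun (congrFun hinn i) j
      simp only [innerInl] at h2
      by_cases hc : i = i0 ∧ j = j0
      · obtain ⟨rfl, rfl⟩ := hc
        rw [he, he']
      · rwa [if_neg hc, if_neg hc] at h2
    subst hBB
    rfl
  · -- inl inr : contradiction
    exfalso
    obtain ⟨i0, j0⟩ := e
    dsimp at hi hj hinn he
    subst hi; subst hj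
    have h2 := congrFun (congrFun hinn i0) j0
    rw [innerInl_self, innerInr_self_self] at h2
    exact absurd h2 (by simp)
  · -- inr inl : contradiction
    exfalso
    obtain ⟨i0', j0'⟩ := e'
    dsimp at hi hj hinn he'
    subst hi; subst hj
    have h2 := congrFun (congrFun hinn i0) j0
    rw [innerInr_self_self, innerInl_self] at h2
    exact absurd h2 (by simp)
  · -- inr inr
    subst hi; subst hj
    have hCC : C = C' := by
      apply Subtype.ext
      funext r c
      have h2 := congrFun (congrFun hinn (i0.succAbove r)) (j0.succAbove c)
      simpa using h2
    subst hCC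
    rfl


lemma bool_eq_false {b : Bool} (h : ¬ b = true) : b = false := by cases b <;> simp_all

lemma psi_surj : Function.Surjective (psi (p := p)) := by
  rintro ⟨A, hA, hll⟩
  obtain ⟨j0, hj0row⟩ := char_pair (fun j => A (Fin.last (p+1)) j) (hA.1 _) hll
  obtain ⟨i0, hi0col⟩ := char_pair (fun i => A i (Fin.last (p+1))) (hA.2 _) hll
  have hAi0last : A (Fin.castSucc i0) (Fin.last (p+1)) = true := (hi0col _).2 (Or.inr rfl)
  have hAlastj0 : A (Fin.last (p+1)) (Fin.castSucc j0) = true := (hj0row _).2 (Or.inr rfl)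
  obtain ⟨j1, hrowi0⟩ := char_pair (fun j => A (Fin.castSucc i0) j) (hA.1 _) hAi0last
  obtain ⟨i1, hcolj0⟩ := char_pair (fun i => A i (Fin.castSucc j0)) (hA.2 _) hAlastj0
  cases hb : A (Fin.castSucc i0) (Fin.castSucc j0) with
  | true =>
    have hj1 : j1 = j0 := by
      rcases (hrowi0 (Fin.castSucc j0)).1 hb with h' | h'
      · exact absurd h' (Fin.castSucc_lt_last j0).ne
      · exact (Fin.castSucc_inj.mp h').symm
    have hi1 : i1 = i0 := by
      rcases (hcolj0 (Fin.castSucc i0)).1 hb with h' | h'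
      · exact absurd h' (Fin.castSucc_lt_last i0).ne
      · exact (Fin.castSucc_inj.mp h').symm
    rw [hj1] at hrowi0
    rw [hi1] at hcolj0
    set C : Fin p → Fin p → Bool :=
      fun r c => A (Fin.castSucc (i0.succAbove r)) (Fin.castSucc (j0.succAbove c)) with hCdef
    have hAeq : A = mk i0 j0 (innerInr C i0 j0) := by
      funext i j
      induction i using Fin.lastCases with
      | last =>
        induction j using Fin.lastCases with
        | last => rw [hll, mk_last_last]
        | cast j =>
          rw [mk_last_castSucc]
          exact bool_eq_decide ((hj0row _).trans
            (by simp [Fin.castSucc_inj, (Fin.castSucc_lt_last j).ne]))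
      | cast i =>
        induction j using Fin.lastCases with
        | last =>
          rw [mk_castSucc_last]
          exact bool_eq_decide ((hi0col _).trans
            (by simp [Fin.castSucc_inj, (Fin.castSucc_lt_last i).ne]))
        | cast j =>
          rw [mk_castSucc_castSucc]
          rcases eq_or_ne i i0 with heq | hne
          · rw [heq]
            rcases eq_or_ne j j0 with heq2 | hne2
            · rw [heq2, innerInr_self_self]
              exact hb
            · obtain ⟨c, rfl⟩ := Fin.exists_succAbove_eq hne2
              rw [innerInr_self_succAbove]
              apply bool_eq_false
              rw [hrowi0]
              rintro (h' | h')
              · exact (Fin.castSucc_lt_last _).ne h'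
              · exact Fin.succAbove_ne j0 c (Fin.castSucc_inj.mp h')
          · obtain ⟨r, rfl⟩ := Fin.exists_succAbove_eq hne
            rcases eq_or_ne j j0 with heq2 | hne2
            · rw [heq2, innerInr_succAbove_self]
              apply bool_eq_false
              rw [hcolj0]
              rintro (h' | h')
              · exact (Fin.castSucc_lt_last _).ne h'
              · exact Fin.succAbove_ne i0 r (Fin.castSucc_inj.mp h')
            · obtain ⟨c, rfl⟩ := Fin.exists_succAbove_eq hne2
              rw [innerInr_succAbove_succAbove]
    have hmk : isLambda (p+2) 2 (mk i0 j0 (innerInr C i0 j0)) := by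
      rw [← hAeq]; exact hA
    obtain ⟨hrows, hcols⟩ := (mk_isLambda_iff i0 j0 _).1 hmk
    have hC2 : isLambda p 2 C := by
      constructor
      · intro r
        have hh := hrows (i0.succAbove r)
        rw [if_neg (Fin.succAbove_ne i0 r)] at hh
        rw [card_filter_succAbove (fun j => innerInr C i0 j0 (i0.succAbove r) j) j0] at hh
        simpa using hh
      · intro c
        have hh := hcols (j0.succAbove c)
        rw [if_neg (Fin.succAbove_ne j0 c)] at hh
        rw [card_filter_succAbove (fun i => innerInr C i0 j0 i (j0.succAbove c)) i0] at hh
        simpa using hh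
    exact ⟨.inr ⟨i0, j0, ⟨C, hC2⟩⟩, Subtype.ext hAeq.symm⟩
  | false =>
    set B : Fin (p+1) → Fin (p+1) → Bool :=
      fun i j => if i = i0 ∧ j = j0 then true
        else A (Fin.castSucc i) (Fin.castSucc j) with hBdef
    have hB1 : B i0 j0 = true := if_pos ⟨rfl, rfl⟩
    have hinner : ∀ i j, innerInl B i0 j0 i j = A (Fin.castSucc i) (Fin.castSucc j) := by
      intro i j
      by_cases hc : i = i0 ∧ j = j0
      · simp only [innerInl, if_pos hc]
        rw [hc.1, hc.2, hb]
      · simp only [innerInl, if_neg hc, hBdef]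
    have hAeq : A = mk i0 j0 (innerInl B i0 j0) := by
      funext i j
      induction i using Fin.lastCases with
      | last =>
        induction j using Fin.lastCases with
        | last => rw [hll, mk_last_last]
        | cast j =>
          rw [mk_last_castSucc]
          exact bool_eq_decide ((hj0row _).trans
            (by simp [Fin.castSucc_inj, (Fin.castSucc_lt_last j).ne]))
      | cast i =>
        induction j using Fin.lastCases with
        | last =>
          rw [mk_castSucc_last]
          exact bool_eq_decide ((hi0col _).trans
            (by simp [Fin.castSucc_inj, (Fin.castSucc_lt_last i).ne]))
        | cast j =>
          rw [mk_castSucc_castSucc, hinner]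
    have hmk : isLambda (p+2) 2 (mk i0 j0 (innerInl B i0 j0)) := by
      rw [← hAeq]; exact hA
    obtain ⟨hrows, hcols⟩ := (mk_isLambda_iff i0 j0 _).1 hmk
    have hB2 : isLambda (p+1) 2 B := by
      constructor
      · intro i
        rcases eq_or_ne i i0 with heq | hne
        · rw [heq]
          have hh := hrows i0
          rw [if_pos rfl] at hh
          rw [card_filter_succAbove (fun j => innerInl B i0 j0 i0 j) j0] at hh
          rw [card_filter_succAbove (fun j => B i0 j) j0, hB1]
          simp only [innerInl_self, innerInl_sa_right, Bool.false_eq_true, if_false,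
            zero_add, eq_self_iff_true, if_true] at hh ⊢
          omega
        · have hh := hrows i
          rw [if_neg hne] at hh
          rw [← hh]
          congr 1
          apply Finset.filter_congr
          intro j _
          simp only [innerInl]
          rw [if_neg (fun hc => hne hc.1)]
      · intro j
        rcases eq_or_ne j j0 with heq | hne
        · rw [heq]
          have hh := hcols j0
          rw [if_pos rfl] at hh
          rw [card_filter_succAbove (fun i => innerInl B i0 j0 i j0) i0] at hh
          rw [card_filter_succAbove (fun i => B i j0) i0, hB1]
          simp only [innerInl_self, innerInl_sa_left, Bool.false_eq_true, if_false,
            zero_add, eq_self_iff_true, if_true] at hh ⊢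
          omega
        · have hh := hcols j
          rw [if_neg hne] at hh
          rw [← hh]
          congr 1
          apply Finset.filter_congr
          intro i _
          simp only [innerInl]
          rw [if_neg (fun hc => hne hc.2)]
    exact ⟨.inl ⟨⟨B, hB2⟩, ⟨(i0, j0), hB1⟩⟩, Subtype.ext hAeq.symm⟩

instance instDecIsLambda (n k : ℕ) : DecidablePred (isLambda n k) := fun A => by
  unfold isLambda; infer_instance

lemma card_ones (B : Fin (p+1) → Fin (p+1) → Bool) (hB : isLambda (p+1) 2 B) :
    Nat.card {e : Fin (p+1) × Fin (p+1) // B e.1 e.2 = true} = 2 * (p+1) := by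
  rw [Nat.card_eq_fintype_card, Fintype.card_subtype, Finset.card_filter,
    Fintype.sum_prod_type]
  have hrow : ∀ i : Fin (p+1), (∑ j, if B i j = true then 1 else 0) = 2 := fun i => by
    rw [← Finset.card_filter]; exact hB.1 i
  rw [Finset.sum_congr rfl (fun i _ => hrow i)]
  simp [mul_comm]

lemma card_Tl : Nat.card (Tl p) = lam (p+1) 2 * (2 * (p+1)) := by
  rw [Nat.card_eq_fintype_card, Fintype.card_sigma]
  have : ∀ B : {B : Fin (p+1) → Fin (p+1) → Bool // isLambda (p+1) 2 B},
      Fintype.card {e : Fin (p+1) × Fin (p+1) // B.1 e.1 e.2 = true} = 2 * (p+1) := by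
    intro B
    rw [← Nat.card_eq_fintype_card]
    exact card_ones B.1 B.2
  rw [Finset.sum_congr rfl (fun B _ => this B)]
  rw [Finset.sum_const, Finset.card_univ, smul_eq_mul]
  rw [lam, Nat.card_eq_fintype_card]

lemma card_Tr : Nat.card (Tr p) = (p+1) * ((p+1) * lam p 2) := by
  rw [Nat.card_prod, Nat.card_prod, lam]
  simp [Nat.card_eq_fintype_card]

lemma key (p : ℕ) (h : 0 < p + 2) :
    lamPos (p+2) 2 h = 2 * (p+1) * lam (p+1) 2 + (p+1)^2 * lam p 2 := by
  have hlast : lastIdx (p+2) h = Fin.last (p+1) := by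
    ext
    simp [lastIdx, Fin.last]
  have hcardS : lamPos (p+2) 2 h = Nat.card (SP p) := by
    unfold lamPos
    rw [hlast]
  rw [hcardS]
  have hbij : Nat.card (SP p) = Nat.card (Tl p ⊕ Tr p) :=
    (Nat.card_congr (Equiv.ofBijective psi ⟨psi_inj, psi_surj⟩)).symm
  rw [hbij, Nat.card_sum, card_Tl, card_Tr]
  ring

end LamAux


/-- λ⁺_{n,2} = 2(n−1)λ_{n−1,2} + (n−1)²λ_{n−2,2} for n ≥ 3. -/
theorem lamPos_two_rec (n : ℕ) (hn : 3 ≤ n) (h : 0 < n) :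
    lamPos n 2 h = 2 * (n - 1) * lam (n - 1) 2 + (n - 1) ^ 2 * lam (n - 2) 2 := by
  obtain ⟨p, rfl⟩ : ∃ p, n = p + 2 := ⟨n - 2, by omega⟩
  have h1 : p + 2 - 1 = p + 1 := by omega
  have h2 : p + 2 - 2 = p := by omega
  rw [h1, h2]
  exact LamAux.key p h
end

section
/- For n ≥ 3, the number λ_{n,2} of n×n binary matrices with exactly two 1's in each row and each column satisfies the recursion 2·λ_{n,2} = 2(n-1)n·λ_{n-1,2} + (n-1)²n·λ_{n-2,2}, with initial values λ_{1,2} = 0 and λ_{2,2} = 1. -/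
set_option linter.unusedVariables false
set_option maxHeartbeats 1000000
open Finset


-- filter card invariant under precomposition with an equiv
lemma card_filter_equiv {α β : Type*} [Fintype α] [Fintype β] [DecidableEq β]
    (e : α ≃ β) (p : β → Prop) [DecidablePred p] [DecidablePred fun x => p (e x)] :
    (Finset.univ.filter fun x => p (e x)).card = (Finset.univ.filter p).card := by
  apply Finset.card_bij' (fun x _ => e x) (fun y _ => e.symm y) <;> simp

lemma card_filter_insertNth {m : ℕ} (j : Fin (m + 1)) (b : Bool) (g : Fin m → Bool) :
    (Finset.univ.filter fun c => Fin.insertNth (α := fun _ => Bool) j b g c = true).card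
      = (Finset.univ.filter fun c => g c = true).card + (if b = true then 1 else 0) := by
  rw [Finset.card_filter, Finset.card_filter, Fin.sum_univ_succAbove _ j]
  simp [Fin.insertNth_apply_same, Fin.insertNth_apply_succAbove, add_comm]

lemma card_filter_snoc {m : ℕ} (b : Bool) (g : Fin m → Bool) :
    (Finset.univ.filter fun c => Fin.snoc (α := fun _ => Bool) g b c = true).card
      = (Finset.univ.filter fun c => g c = true).card + (if b = true then 1 else 0) := by
  rw [← Fin.insertNth_last']
  exact card_filter_insertNth _ _ _

lemma isLambda_reindex {n k : ℕ} (σ τ : Equiv.Perm (Fin n)) {A : Fin n → Fin n → Bool}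
    (h : isLambda n k A) : isLambda n k (fun i j => A (σ i) (τ j)) := by
  constructor
  · intro i
    rw [card_filter_equiv τ (fun j => A (σ i) j = true)]
    exact h.1 (σ i)
  · intro j
    rw [card_filter_equiv σ (fun i => A i (τ j) = true)]
    exact h.2 (τ j)

lemma card_entry (n k : ℕ) (i j i' j' : Fin n) :
    Nat.card {A : Fin n → Fin n → Bool // isLambda n k A ∧ A i j = true}
      = Nat.card {A : Fin n → Fin n → Bool // isLambda n k A ∧ A i' j' = true} := by
  apply Nat.card_congr
  refine ⟨fun x => ⟨fun r c => x.1 (Equiv.swap i i' r) (Equiv.swap j j' c),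
      isLambda_reindex _ _ x.2.1, ?_⟩,
    fun x => ⟨fun r c => x.1 (Equiv.swap i i' r) (Equiv.swap j j' c),
      isLambda_reindex _ _ x.2.1, ?_⟩, ?_, ?_⟩
  · simp only [Equiv.swap_apply_right]; exact x.2.2
  · simp only [Equiv.swap_apply_left]; exact x.2.2
  · rintro ⟨A, h⟩; ext r c; simp [Equiv.swap_apply_self]
  · rintro ⟨A, h⟩; ext r c; simp [Equiv.swap_apply_self]

def eFst {γ δ : Type*} (R : γ × δ → Prop) :
    {p : γ × δ // R p} ≃ Σ c : γ, {d : δ // R (c, d)} where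
  toFun x := ⟨x.1.1, ⟨x.1.2, x.2⟩⟩
  invFun s := ⟨(s.1, s.2.1), s.2.2⟩
  left_inv := fun ⟨⟨c, d⟩, h⟩ => rfl
  right_inv := fun ⟨c, d, h⟩ => rfl

def eSnd {γ δ : Type*} (R : γ × δ → Prop) :
    {p : γ × δ // R p} ≃ Σ d : δ, {c : γ // R (c, d)} where
  toFun x := ⟨x.1.2, ⟨x.1.1, x.2⟩⟩
  invFun s := ⟨(s.2.1, s.1), s.2.2⟩
  left_inv := fun ⟨⟨c, d⟩, h⟩ => rfl
  right_inv := fun ⟨c, d, h⟩ => rfl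

def eGroup {γ δ : Type*} (P : γ → Prop) (Q : γ × δ → Prop) :
    {p : γ × δ // P p.1 ∧ Q p} ≃ Σ c : {c : γ // P c}, {d : δ // Q (c.1, d)} where
  toFun x := ⟨⟨x.1.1, x.2.1⟩, ⟨x.1.2, x.2.2⟩⟩
  invFun s := ⟨(s.1.1, s.2.1), s.1.2, s.2.2⟩
  left_inv := fun ⟨⟨c, d⟩, h⟩ => rfl
  right_inv := fun ⟨⟨c, hc⟩, d, hd⟩ => rfl

lemma natCard_sigma {ι : Type*} [Fintype ι] (f : ι → Type*) [∀ i, Finite (f i)] :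
    Nat.card (Σ i, f i) = ∑ i, Nat.card (f i) := by
  letI : ∀ i, Fintype (f i) := fun i => Fintype.ofFinite _
  simp only [Nat.card_eq_fintype_card, Fintype.card_sigma]

-- number of true entries in a row-sum-k matrix
lemma card_ones {n k : ℕ} {A : Fin n → Fin n → Bool} (h : isLambda n k A) :
    Nat.card {q : Fin n × Fin n // A q.1 q.2 = true} = n * k := by
  rw [Nat.card_congr (eFst fun q : Fin n × Fin n => A q.1 q.2 = true), natCard_sigma]
  have h1 : ∀ i : Fin n, Nat.card {d : Fin n // A i d = true} = k := by
    intro i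
    rw [Nat.card_eq_fintype_card, Fintype.card_subtype]
    exact h.1 i
  calc ∑ i : Fin n, Nat.card {d : Fin n // A i d = true} = ∑ _i : Fin n, k :=
        Finset.sum_congr rfl (fun i _ => h1 i)
    _ = n * k := by simp [mul_comm]

abbrev PairTy (n k : ℕ) :=
  {p : (Fin n → Fin n → Bool) × (Fin n × Fin n) // isLambda n k p.1 ∧ p.1 p.2.1 p.2.2 = true}

lemma count_pairs (n k : ℕ) : Nat.card (PairTy n k) = lam n k * (n * k) := by
  letI : Fintype {A : Fin n → Fin n → Bool // isLambda n k A} := Fintype.ofFinite _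
  have e1 : Nat.card (PairTy n k)
      = Nat.card (Σ c : {A : Fin n → Fin n → Bool // isLambda n k A},
          {d : Fin n × Fin n // c.1 d.1 d.2 = true}) :=
    Nat.card_congr (eGroup (isLambda n k) (fun p : (Fin n → Fin n → Bool) × (Fin n × Fin n) => p.1 p.2.1 p.2.2 = true))
  rw [e1, natCard_sigma]
  calc ∑ c : {A : Fin n → Fin n → Bool // isLambda n k A},
        Nat.card {d : Fin n × Fin n // c.1 d.1 d.2 = true}
      = ∑ c : {A : Fin n → Fin n → Bool // isLambda n k A}, (n * k) :=
        Finset.sum_congr rfl (fun c _ => card_ones c.2)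
    _ = lam n k * (n * k) := by
        rw [Finset.sum_const, smul_eq_mul, lam, Nat.card_eq_fintype_card, Fintype.card]

lemma count_pairs_entry (n k : ℕ) (i0 j0 : Fin n) :
    Nat.card (PairTy n k)
      = (n * n) * Nat.card {A : Fin n → Fin n → Bool // isLambda n k A ∧ A i0 j0 = true} := by
  have e1 : Nat.card (PairTy n k)
      = Nat.card (Σ d : Fin n × Fin n,
          {c : Fin n → Fin n → Bool // isLambda n k c ∧ c d.1 d.2 = true}) :=
    Nat.card_congr (eSnd fun p : (Fin n → Fin n → Bool) × (Fin n × Fin n) =>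
      isLambda n k p.1 ∧ p.1 p.2.1 p.2.2 = true)
  rw [e1, natCard_sigma]
  calc ∑ d : Fin n × Fin n,
        Nat.card {c : Fin n → Fin n → Bool // isLambda n k c ∧ c d.1 d.2 = true}
      = ∑ d : Fin n × Fin n,
        Nat.card {A : Fin n → Fin n → Bool // isLambda n k A ∧ A i0 j0 = true} :=
        Finset.sum_congr rfl (fun d _ => card_entry n k d.1 d.2 i0 j0)
    _ = (n * n) * _ := by
        rw [Finset.sum_const, smul_eq_mul]
        congr 1
        simp

variable {m : ℕ}

def mkFalse (i j : Fin (m + 1)) (B : Fin (m + 1) → Fin (m + 1) → Bool) :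
    Fin (m + 2) → Fin (m + 2) → Bool :=
  Fin.snoc (fun r' => Fin.snoc (fun c' => if r' = i ∧ c' = j then false else B r' c')
      (decide (r' = i)))
    (Fin.snoc (fun c' => decide (c' = j)) true)

def mkTrue (i j : Fin (m + 1)) (B : Fin m → Fin m → Bool) :
    Fin (m + 2) → Fin (m + 2) → Bool :=
  Fin.snoc (Fin.insertNth i (Fin.snoc (fun c' => decide (c' = j)) true)
      (fun r'' => Fin.snoc (Fin.insertNth j false (fun c'' => B r'' c'')) false))
    (Fin.snoc (fun c' => decide (c' = j)) true)

section entries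
variable (i j : Fin (m + 1)) (B : Fin (m + 1) → Fin (m + 1) → Bool) (C : Fin m → Fin m → Bool)

@[simp] lemma mkFalse_cc (r' c' : Fin (m + 1)) :
    mkFalse i j B r'.castSucc c'.castSucc = if r' = i ∧ c' = j then false else B r' c' := by
  simp [mkFalse]

@[simp] lemma mkFalse_cl (r' : Fin (m + 1)) :
    mkFalse i j B r'.castSucc (Fin.last (m + 1)) = decide (r' = i) := by
  simp [mkFalse]

@[simp] lemma mkFalse_lc (c' : Fin (m + 1)) :
    mkFalse i j B (Fin.last (m + 1)) c'.castSucc = decide (c' = j) := by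
  simp [mkFalse]

@[simp] lemma mkFalse_ll :
    mkFalse i j B (Fin.last (m + 1)) (Fin.last (m + 1)) = true := by
  simp [mkFalse]

@[simp] lemma mkTrue_lc (c' : Fin (m + 1)) :
    mkTrue i j C (Fin.last (m + 1)) c'.castSucc = decide (c' = j) := by
  simp [mkTrue]

@[simp] lemma mkTrue_ll :
    mkTrue i j C (Fin.last (m + 1)) (Fin.last (m + 1)) = true := by
  simp [mkTrue]

@[simp] lemma mkTrue_ic (c' : Fin (m + 1)) :
    mkTrue i j C i.castSucc c'.castSucc = decide (c' = j) := by
  simp [mkTrue]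

@[simp] lemma mkTrue_il :
    mkTrue i j C i.castSucc (Fin.last (m + 1)) = true := by
  simp [mkTrue]

@[simp] lemma mkTrue_sc (r'' : Fin m) (c' : Fin (m + 1)) :
    mkTrue i j C (i.succAbove r'').castSucc c'.castSucc
      = Fin.insertNth (α := fun _ => Bool) j false (fun c'' => C r'' c'') c' := by
  simp [mkTrue]

@[simp] lemma mkTrue_sl (r'' : Fin m) :
    mkTrue i j C (i.succAbove r'').castSucc (Fin.last (m + 1)) = false := by
  simp [mkTrue]

-- column descriptions (pointwise)
lemma mkFalse_col_c (c' : Fin (m + 1)) (r : Fin (m + 2)) :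
    mkFalse i j B r c'.castSucc
      = Fin.snoc (α := fun _ => Bool)
          (fun r' => if r' = i ∧ c' = j then false else B r' c') (decide (c' = j)) r := by
  induction r using Fin.lastCases with
  | last => simp
  | cast r' => simp

lemma mkFalse_col_l (r : Fin (m + 2)) :
    mkFalse i j B r (Fin.last (m + 1))
      = Fin.snoc (α := fun _ => Bool) (fun r' => decide (r' = i)) true r := by
  induction r using Fin.lastCases with
  | last => simp
  | cast r' => simp

lemma mkTrue_col_l (r : Fin (m + 2)) :
    mkTrue i j C r (Fin.last (m + 1))
      = Fin.snoc (α := fun _ => Bool)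
          (Fin.insertNth (α := fun _ => Bool) i true (fun _ => false)) true r := by
  induction r using Fin.lastCases with
  | last => simp
  | cast r' =>
    by_cases hr : r' = i
    · subst hr; simp
    · obtain ⟨r'', rfl⟩ := Fin.exists_succAbove_eq hr
      simp [Fin.insertNth_apply_succAbove]

lemma mkTrue_col_j (r : Fin (m + 2)) :
    mkTrue i j C r j.castSucc
      = Fin.snoc (α := fun _ => Bool)
          (Fin.insertNth (α := fun _ => Bool) i true (fun _ => false)) true r := by
  induction r using Fin.lastCases with
  | last => simp
  | cast r' =>
    by_cases hr : r' = i
    · subst hr; simp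
    · obtain ⟨r'', rfl⟩ := Fin.exists_succAbove_eq hr
      simp [Fin.insertNth_apply_succAbove]

lemma mkTrue_col_s (c'' : Fin m) (r : Fin (m + 2)) :
    mkTrue i j C r (j.succAbove c'').castSucc
      = Fin.snoc (α := fun _ => Bool)
          (Fin.insertNth (α := fun _ => Bool) i false (fun r'' => C r'' c'')) false r := by
  induction r using Fin.lastCases with
  | last => simp [Fin.succAbove_ne j c'']
  | cast r' =>
    by_cases hr : r' = i
    · subst hr; simp [Fin.succAbove_ne j c'']
    · obtain ⟨r'', rfl⟩ := Fin.exists_succAbove_eq hr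
      simp [Fin.insertNth_apply_succAbove]

end entries

lemma card_filter_if_eq {a : Fin (m + 1)} {g : Fin (m + 1) → Bool} (hg : g a = true) :
    (Finset.univ.filter fun x => (if x = a then false else g x) = true).card
      = (Finset.univ.filter fun x => g x = true).card - 1 := by
  have he : (Finset.univ.filter fun x => (if x = a then false else g x) = true)
      = (Finset.univ.filter fun x => g x = true).erase a := by
    ext x; by_cases hx : x = a <;> simp [hx]
  rw [he, Finset.card_erase_of_mem]
  simp [hg]

lemma isLambda_mkFalse {i j : Fin (m + 1)} {B : Fin (m + 1) → Fin (m + 1) → Bool}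
    (h : isLambda (m + 1) 2 B) (hij : B i j = true) :
    isLambda (m + 2) 2 (mkFalse i j B) := by
  constructor
  · intro r
    induction r using Fin.lastCases with
    | last =>
      simp only [mkFalse, Fin.snoc_last]
      rw [card_filter_snoc]
      simp [Finset.filter_eq']
    | cast r' =>
      simp only [mkFalse, Fin.snoc_castSucc]
      rw [card_filter_snoc]
      by_cases hr : r' = i
      · subst hr
        simp only [eq_self_iff_true, true_and]
        rw [card_filter_if_eq hij, h.1 r']
        simp
      · have hpt : ∀ c', (if r' = i ∧ c' = j then false else B r' c') = B r' c' := by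
          intro c'; simp [hr]
        simp only [hpt]
        rw [h.1 r']
        simp [hr]
  · intro c
    induction c using Fin.lastCases with
    | last =>
      simp only [mkFalse_col_l]
      rw [card_filter_snoc]
      simp [Finset.filter_eq']
    | cast c' =>
      simp only [mkFalse_col_c]
      rw [card_filter_snoc]
      by_cases hc : c' = j
      · subst hc
        simp only [eq_self_iff_true, and_true]
        rw [card_filter_if_eq (a := i) (g := fun r' => B r' c') hij]
        rw [show (Finset.univ.filter fun x => (fun r' => B r' c') x = true)
            = (Finset.univ.filter fun r' => B r' c' = true) from rfl, h.2 c']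
        simp
      · have hpt : ∀ r', (if r' = i ∧ c' = j then false else B r' c') = B r' c' := by
          intro r'; simp [hc]
        simp only [hpt]
        rw [h.2 c']
        simp [hc]

lemma isLambda_mkTrue {i j : Fin (m + 1)} {C : Fin m → Fin m → Bool}
    (h : isLambda m 2 C) :
    isLambda (m + 2) 2 (mkTrue i j C) := by
  constructor
  · intro r
    induction r using Fin.lastCases with
    | last =>
      simp only [mkTrue, Fin.snoc_last]
      rw [card_filter_snoc]
      simp [Finset.filter_eq']
    | cast r' =>
      simp only [mkTrue, Fin.snoc_castSucc]
      by_cases hr : r' = i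
      · subst hr
        simp only [Fin.insertNth_apply_same]
        rw [card_filter_snoc]
        simp [Finset.filter_eq']
      · obtain ⟨r'', rfl⟩ := Fin.exists_succAbove_eq hr
        simp only [Fin.insertNth_apply_succAbove]
        rw [card_filter_snoc, card_filter_insertNth]
        rw [h.1 r'']
        simp
  · intro c
    induction c using Fin.lastCases with
    | last =>
      simp only [mkTrue_col_l]
      rw [card_filter_snoc, card_filter_insertNth]
      simp
    | cast c' =>
      by_cases hc : c' = j
      · subst hc
        simp only [mkTrue_col_j]
        rw [card_filter_snoc, card_filter_insertNth]
        simp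
      · obtain ⟨c'', rfl⟩ := Fin.exists_succAbove_eq hc
        simp only [mkTrue_col_s]
        rw [card_filter_snoc, card_filter_insertNth]
        rw [h.2 c'']
        simp

lemma filter_eq_pair {N : ℕ} {f : Fin N → Bool} {x y : Fin N} (hxy : x ≠ y)
    (hcard : (Finset.univ.filter fun c => f c = true).card = 2)
    (hx : f x = true) (hy : f y = true) :
    ∀ c, f c = true ↔ (c = x ∨ c = y) := by
  have hsub : ({x, y} : Finset (Fin N)) ⊆ Finset.univ.filter fun c => f c = true := by
    intro c hc
    rcases Finset.mem_insert.mp hc with h | h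
    · subst h; simp [hx]
    · rw [Finset.mem_singleton] at h; subst h; simp [hy]
  have hpair : ({x, y} : Finset (Fin N)) = Finset.univ.filter fun c => f c = true := by
    apply Finset.eq_of_subset_of_card_le hsub
    rw [hcard, Finset.card_insert_of_notMem (by simp [hxy]), Finset.card_singleton]
  intro c
  have : (f c = true) ↔ c ∈ Finset.univ.filter fun c => f c = true := by simp
  rw [this, ← hpair]
  simp

lemma exists_other {n : ℕ} {f : Fin (n + 1) → Bool}
    (hcard : (Finset.univ.filter fun c => f c = true).card = 2) (hl : f (Fin.last n) = true) :
    ∃ x : Fin n, f x.castSucc = true ∧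
      ∀ c, f c = true ↔ (c = Fin.last n ∨ c = x.castSucc) := by
  obtain ⟨a, b, hab, hs⟩ := Finset.card_eq_two.mp hcard
  have hmem : Fin.last n ∈ Finset.univ.filter fun c => f c = true := by simp [hl]
  have ha : f a = true := by
    have : a ∈ Finset.univ.filter fun c => f c = true := by rw [hs]; simp
    simpa using this
  have hb : f b = true := by
    have : b ∈ Finset.univ.filter fun c => f c = true := by rw [hs]; simp
    simpa using this
  rw [hs, Finset.mem_insert, Finset.mem_singleton] at hmem
  rcases hmem with h | h
  · -- last = a, other is b
    obtain ⟨x, hx⟩ := Fin.exists_castSucc_eq.mpr (show b ≠ Fin.last n from h ▸ hab.symm)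
    exact ⟨x, hx.symm ▸ hb, fun c => by
      rw [filter_eq_pair hab hcard ha hb c, ← h, hx]⟩
  · obtain ⟨x, hx⟩ := Fin.exists_castSucc_eq.mpr (show a ≠ Fin.last n from h ▸ hab)
    exact ⟨x, hx.symm ▸ ha, fun c => by
      rw [filter_eq_pair hab hcard ha hb c, ← h, hx, or_comm]⟩

@[simp] lemma mkTrue_cl (i j : Fin (m + 1)) (C : Fin m → Fin m → Bool) (r' : Fin (m + 1)) :
    mkTrue i j C r'.castSucc (Fin.last (m + 1)) = decide (r' = i) := by
  by_cases hr : r' = i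
  · subst hr; simp
  · obtain ⟨r'', rfl⟩ := Fin.exists_succAbove_eq hr
    simp [Fin.succAbove_ne]

abbrev Tgt (m : ℕ) := {A : Fin (m + 2) → Fin (m + 2) → Bool //
  isLambda (m + 2) 2 A ∧ A (Fin.last (m + 1)) (Fin.last (m + 1)) = true}

abbrev DT (m : ℕ) := (Fin (m + 1) × Fin (m + 1)) × {C : Fin m → Fin m → Bool // isLambda m 2 C}

abbrev DF (m : ℕ) := {p : (Fin (m + 1) → Fin (m + 1) → Bool) × (Fin (m + 1) × Fin (m + 1)) //
  isLambda (m + 1) 2 p.1 ∧ p.1 p.2.1 p.2.2 = true}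

def Phi (m : ℕ) : DT m ⊕ DF m → Tgt m
  | Sum.inl x => ⟨mkTrue x.1.1 x.1.2 x.2.1, isLambda_mkTrue x.2.2, by simp⟩
  | Sum.inr x => ⟨mkFalse x.1.2.1 x.1.2.2 x.1.1, isLambda_mkFalse x.2.1 x.2.2, by simp⟩

lemma phi_inj (m : ℕ) : Function.Injective (Phi m) := by
  intro a b hab
  have hm := congrArg Subtype.val hab
  simp only [Phi] at hm
  match a, b with
  | Sum.inl ⟨⟨i, j⟩, C, hC⟩, Sum.inl ⟨⟨i', j'⟩, C', hC'⟩ =>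
    simp only at hm
    have hj : j = j' := by
      have := congrFun (congrFun hm (Fin.last (m + 1))) j.castSucc
      simpa using this
    subst hj
    have hi : i = i' := by
      by_contra hne
      obtain ⟨y, hy⟩ := Fin.exists_succAbove_eq hne
      have := congrFun (congrFun hm i.castSucc) (Fin.last (m + 1))
      rw [← hy] at this
      simp at this
    subst hi
    have hCC : C = C' := by
      funext r'' c''
      have := congrFun (congrFun hm (i.succAbove r'').castSucc) ((j.succAbove c'').castSucc)
      simpa [Fin.insertNth_apply_succAbove] using this
    subst hCC
    rfl
  | Sum.inl ⟨⟨i, j⟩, C, hC⟩, Sum.inr ⟨⟨B, i', j'⟩, hB, hBij⟩ =>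
    exfalso
    simp only at hm
    have hj : j = j' := by
      have := congrFun (congrFun hm (Fin.last (m + 1))) j.castSucc
      simpa using this
    subst hj
    have hi : i = i' := by
      have := congrFun (congrFun hm i.castSucc) (Fin.last (m + 1))
      simpa using this
    subst hi
    have := congrFun (congrFun hm i.castSucc) j.castSucc
    simp at this
  | Sum.inr ⟨⟨B, i', j'⟩, hB, hBij⟩, Sum.inl ⟨⟨i, j⟩, C, hC⟩ =>
    exfalso
    simp only at hm
    replace hm := hm.symm
    have hj : j = j' := by
      have := congrFun (congrFun hm (Fin.last (m + 1))) j.castSucc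
      simpa using this
    subst hj
    have hi : i = i' := by
      have := congrFun (congrFun hm i.castSucc) (Fin.last (m + 1))
      simpa using this
    subst hi
    have := congrFun (congrFun hm i.castSucc) j.castSucc
    simp at this
  | Sum.inr ⟨⟨B, i, j⟩, hB, hBij⟩, Sum.inr ⟨⟨B', i', j'⟩, hB', hBij'⟩ =>
    simp only at hm
    have hj : j = j' := by
      have := congrFun (congrFun hm (Fin.last (m + 1))) j.castSucc
      simpa using this
    subst hj
    have hi : i = i' := by
      have := congrFun (congrFun hm i.castSucc) (Fin.last (m + 1))
      simpa using this
    subst hi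
    have hBB : B = B' := by
      funext r' c'
      by_cases hrc : r' = i ∧ c' = j
      · obtain ⟨rfl, rfl⟩ := hrc
        have h1 : B r' c' = true := hBij
        have h2 : B' r' c' = true := hBij'
        rw [h1, h2]
      · have := congrFun (congrFun hm r'.castSucc) c'.castSucc
        simpa [hrc] using this
    subst hBB
    rfl

lemma phi_surj (m : ℕ) : Function.Surjective (Phi m) := by
  rintro ⟨A, hA, hll⟩
  obtain ⟨j, hj1, hj⟩ := exists_other (hA.1 (Fin.last (m + 1))) hll
  obtain ⟨i, hi1, hi⟩ := exists_other (hA.2 (Fin.last (m + 1))) hll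
  have hrowB : ∀ c' : Fin (m + 1), A (Fin.last (m + 1)) c'.castSucc = decide (c' = j) := by
    intro c'
    rw [Bool.eq_iff_iff, hj c'.castSucc]
    simp [(Fin.castSucc_lt_last c').ne, (Fin.castSucc_injective _).eq_iff]
  have hcolB : ∀ r' : Fin (m + 1), A r'.castSucc (Fin.last (m + 1)) = decide (r' = i) := by
    intro r'
    rw [Bool.eq_iff_iff, hi r'.castSucc]
    simp [(Fin.castSucc_lt_last r').ne, (Fin.castSucc_injective _).eq_iff]
  by_cases hij : A i.castSucc j.castSucc = true
  · -- mkTrue case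
    have hil : A i.castSucc (Fin.last (m + 1)) = true := (hi i.castSucc).mpr (Or.inr rfl)
    have hlj : A (Fin.last (m + 1)) j.castSucc = true := (hj j.castSucc).mpr (Or.inr rfl)
    have hrowi := filter_eq_pair (f := fun c => A i.castSucc c)
      (x := j.castSucc) (y := Fin.last (m + 1)) (Fin.castSucc_lt_last j).ne
      (hA.1 i.castSucc) hij hil
    have hcolj := filter_eq_pair (f := fun r => A r j.castSucc)
      (x := i.castSucc) (y := Fin.last (m + 1)) (Fin.castSucc_lt_last i).ne
      (hA.2 j.castSucc) hij hlj
    set C : Fin m → Fin m → Bool :=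
      fun r'' c'' => A (i.succAbove r'').castSucc (j.succAbove c'').castSucc with hCdef
    have hEq : A = mkTrue i j C := by
      funext r c
      induction r using Fin.lastCases with
      | last =>
        induction c using Fin.lastCases with
        | last => simp [hll]
        | cast c' => simp [hrowB c']
      | cast r' =>
        by_cases hr : r' = i
        · subst hr
          induction c using Fin.lastCases with
          | last => simp [hil]
          | cast c' =>
            rw [mkTrue_ic, Bool.eq_iff_iff, hrowi c'.castSucc]
            simp [(Fin.castSucc_lt_last c').ne, (Fin.castSucc_injective _).eq_iff]
        · obtain ⟨r'', rfl⟩ := Fin.exists_succAbove_eq hr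
          induction c using Fin.lastCases with
          | last =>
            rw [mkTrue_sl, hcolB]
            simp [Fin.succAbove_ne]
          | cast c' =>
            by_cases hc : c' = j
            · subst hc
              rw [mkTrue_sc, Fin.insertNth_apply_same, Bool.eq_iff_iff,
                hcolj (i.succAbove r'').castSucc]
              simp [(Fin.castSucc_lt_last _).ne, (Fin.castSucc_injective _).eq_iff,
                Fin.succAbove_ne]
            · obtain ⟨c'', rfl⟩ := Fin.exists_succAbove_eq hc
              rw [mkTrue_sc, Fin.insertNth_apply_succAbove]
    have hC : isLambda m 2 C := by
      constructor
      · intro r''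
        have h2 := hA.1 (i.succAbove r'').castSucc
        rw [hEq] at h2
        simp only [mkTrue, Fin.snoc_castSucc, Fin.insertNth_apply_succAbove] at h2
        rw [card_filter_snoc, card_filter_insertNth] at h2
        simpa using h2
      · intro c''
        have h2 := hA.2 (j.succAbove c'').castSucc
        rw [hEq] at h2
        simp only [mkTrue_col_s] at h2
        rw [card_filter_snoc, card_filter_insertNth] at h2
        simpa using h2
    exact ⟨Sum.inl ⟨(i, j), C, hC⟩, Subtype.ext hEq.symm⟩
  · -- mkFalse case
    set B : Fin (m + 1) → Fin (m + 1) → Bool :=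
      fun r' c' => if r' = i ∧ c' = j then true else A r'.castSucc c'.castSucc with hBdef
    have hBij : B i j = true := by simp [hBdef]
    have hEq : A = mkFalse i j B := by
      funext r c
      induction r using Fin.lastCases with
      | last =>
        induction c using Fin.lastCases with
        | last => simp [hll]
        | cast c' => simp [hrowB c']
      | cast r' =>
        induction c using Fin.lastCases with
        | last => simp [hcolB r']
        | cast c' =>
          rw [mkFalse_cc]
          by_cases hrc : r' = i ∧ c' = j
          · obtain ⟨rfl, rfl⟩ := hrc
            simp only [and_self, if_true, eq_self_iff_true]
            exact Bool.eq_false_iff.mpr hij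
          · rw [if_neg hrc, hBdef]
            simp [hrc]
    have hB : isLambda (m + 1) 2 B := by
      have hBrow : ∀ r', r' ≠ i → ∀ c', B r' c' = A r'.castSucc c'.castSucc := by
        intro r' hr c'; simp [hBdef, hr]
      constructor
      · intro r'
        have h2 := hA.1 r'.castSucc
        rw [hEq] at h2
        simp only [mkFalse, Fin.snoc_castSucc] at h2
        rw [card_filter_snoc] at h2
        by_cases hr : r' = i
        · subst hr
          simp only [eq_self_iff_true, true_and] at h2
          rw [card_filter_if_eq (a := j) (g := B r') hBij] at h2
          have hpos : 0 < (Finset.univ.filter fun c' => B r' c' = true).card :=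
            Finset.card_pos.mpr ⟨j, by simp [hBij]⟩
          simp at h2
          omega
        · have hpt : ∀ c', (if r' = i ∧ c' = j then false else B r' c') = B r' c' := by
            intro c'; simp [hr]
          simp only [hpt] at h2
          simpa [hr] using h2
      · intro c'
        have h2 := hA.2 c'.castSucc
        rw [hEq] at h2
        simp only [mkFalse_col_c] at h2
        rw [card_filter_snoc] at h2
        by_cases hc : c' = j
        · subst hc
          simp only [eq_self_iff_true, and_true] at h2
          rw [card_filter_if_eq (a := i) (g := fun r' => B r' c') hBij] at h2
          have hpos : 0 < (Finset.univ.filter fun r' => B r' c' = true).card :=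
            Finset.card_pos.mpr ⟨i, by simp [hBij]⟩
          simp at h2
          omega
        · have hpt : ∀ r', (if r' = i ∧ c' = j then false else B r' c') = B r' c' := by
            intro r'; simp [hc]
          simp only [hpt] at h2
          simpa [hc] using h2
    exact ⟨Sum.inr ⟨(B, i, j), hB, hBij⟩, Subtype.ext hEq.symm⟩

lemma lam_one : lam 1 2 = 0 := by
  haveI : IsEmpty {A : Fin 1 → Fin 1 → Bool // isLambda 1 2 A} := by
    constructor
    rintro ⟨A, h⟩
    have h1 := h.1 0
    have h2 := Finset.card_filter_le (Finset.univ : Finset (Fin 1)) (fun j => A 0 j = true)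
    rw [h1] at h2
    have : (Finset.univ : Finset (Fin 1)).card = 1 := by simp
    omega
  exact Nat.card_of_isEmpty

lemma lam_two : lam 2 2 = 1 := by
  haveI : Nonempty {A : Fin 2 → Fin 2 → Bool // isLambda 2 2 A} :=
    ⟨⟨fun _ _ => true, by constructor <;> intro x <;> simp⟩⟩
  haveI : Subsingleton {A : Fin 2 → Fin 2 → Bool // isLambda 2 2 A} := by
    constructor
    rintro ⟨A, hA⟩ ⟨B, hB⟩
    have key : ∀ C : Fin 2 → Fin 2 → Bool, isLambda 2 2 C → ∀ i j, C i j = true := by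
      intro C hC i j
      have h1 := hC.1 i
      have : (Finset.univ.filter fun j => C i j = true) = Finset.univ :=
        Finset.eq_univ_of_card _ (by rw [h1]; simp)
      have hj : j ∈ Finset.univ.filter fun j => C i j = true := by
        rw [this]; exact Finset.mem_univ j
      simpa using hj
    apply Subtype.ext
    show A = B
    funext i j
    rw [key A hA i j, key B hB i j]
  exact Nat.card_unique


lemma card_Tgt (m : ℕ) :
    Nat.card (Tgt m) = 2 * (m + 1) * lam (m + 1) 2 + (m + 1) ^ 2 * lam m 2 := by
  have hbij : Function.Bijective (Phi m) := ⟨phi_inj m, phi_surj m⟩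
  have h1 : Nat.card (DT m ⊕ DF m) = Nat.card (Tgt m) := Nat.card_congr (Equiv.ofBijective _ hbij)
  rw [← h1, Nat.card_sum]
  have hDT : Nat.card (DT m) = (m + 1) * (m + 1) * lam m 2 := by
    rw [show Nat.card (DT m) = Nat.card ((Fin (m+1) × Fin (m+1)) ×
      {C : Fin m → Fin m → Bool // isLambda m 2 C}) from rfl, Nat.card_prod, Nat.card_prod]
    have hf : Nat.card (Fin (m + 1)) = m + 1 := by simp [Nat.card_eq_fintype_card]
    rw [hf, ← lam]
  have hDF : Nat.card (DF m) = lam (m + 1) 2 * ((m + 1) * 2) := count_pairs (m + 1) 2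
  rw [hDT, hDF]
  ring

lemma two_lam (m : ℕ) : 2 * lam (m + 2) 2 = (m + 2) * Nat.card (Tgt m) := by
  have h1 := count_pairs (m + 2) 2
  have h2 := count_pairs_entry (m + 2) 2 (Fin.last (m + 1)) (Fin.last (m + 1))
  have h3 : Nat.card {A : Fin (m + 2) → Fin (m + 2) → Bool //
      isLambda (m + 2) 2 A ∧ A (Fin.last (m + 1)) (Fin.last (m + 1)) = true}
      = Nat.card (Tgt m) := rfl
  rw [h3] at h2
  have key : (m + 2) * (2 * lam (m + 2) 2) = (m + 2) * ((m + 2) * Nat.card (Tgt m)) := by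
    calc (m + 2) * (2 * lam (m + 2) 2) = lam (m + 2) 2 * ((m + 2) * 2) := by ring
      _ = (m + 2) * (m + 2) * Nat.card (Tgt m) := h1.symm.trans h2
      _ = (m + 2) * ((m + 2) * Nat.card (Tgt m)) := by ring
  have hpos : 0 < m + 2 := Nat.succ_pos _
  exact Nat.eq_of_mul_eq_mul_left hpos key

/-- Good–Crook recursion: 2λ_{n,2} = 2(n−1)n·λ_{n−1,2} + (n−1)²n·λ_{n−2,2}, with
λ_{1,2} = 0 and λ_{2,2} = 1. -/
theorem lam_two_rec (n : ℕ) (hn : 3 ≤ n) :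
    2 * lam n 2 = 2 * (n - 1) * n * lam (n - 1) 2 + (n - 1) ^ 2 * n * lam (n - 2) 2 ∧
    lam 1 2 = 0 ∧ lam 2 2 = 1 := by
  refine ⟨?_, lam_one, lam_two⟩
  obtain ⟨m, rfl⟩ : ∃ m, n = m + 2 := ⟨n - 2, by omega⟩
  simp only [show m + 2 - 1 = m + 1 from rfl, show m + 2 - 2 = m from rfl]
  rw [two_lam m, card_Tgt m]
  ring
end

section
/- For n ≥ 4, the number λ⁺_{n,3} of n×n binary matrices with exactly three 1's in each row and column and with a 1 in the bottom-right entry satisfies 2·λ⁺_{n,3} = 3(n-1)(3n-8)·λ_{n-1,3} + 2·(αₙ + βₙ + 2γₙ - ηₙ), where λ_{n-1,3} counts (n-1)×(n-1) binary matrices with exactly three 1's per row and column, and αₙ, βₙ, γₙ, ηₙ count the matrices in Λₙ³⁺ whose associated 2×2 submatrix X̃ has respectively four 1's, three 1's, a single column of 1's, and no 1's. -/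
/-- `tildePattern n h X P` holds when the 2×2 submatrix X̃ of `X` (formed by the rows
`s < t` of the other two 1's of the last column and the columns `p < q` of the other
two 1's of the last row) satisfies `P (X s p) (X s q) (X t p) (X t q)`. -/
def tildePattern (n : ℕ) (h : 0 < n) (X : Fin n → Fin n → Bool)
    (P : Bool → Bool → Bool → Bool → Prop) : Prop :=
  ∃ s t p q : Fin n, s < t ∧ p < q ∧
    s ≠ lastIdx n h ∧ t ≠ lastIdx n h ∧ p ≠ lastIdx n h ∧ q ≠ lastIdx n h ∧
    X s (lastIdx n h) = true ∧ X t (lastIdx n h) = true ∧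
    X (lastIdx n h) p = true ∧ X (lastIdx n h) q = true ∧
    P (X s p) (X s q) (X t p) (X t q)

/-- X̃ is a full column of 1's:  [[1,0],[1,0]] or [[0,1],[0,1]]. -/
def patΓ (a b c d : Bool) : Prop :=
  (a = true ∧ c = true ∧ b = false ∧ d = false) ∨
  (b = true ∧ d = true ∧ a = false ∧ c = false)

/-- X̃ is a full row of 1's:  [[1,1],[0,0]] or [[0,0],[1,1]]. -/
def patΔ (a b c d : Bool) : Prop :=
  (a = true ∧ b = true ∧ c = false ∧ d = false) ∨
  (c = true ∧ d = true ∧ a = false ∧ b = false)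

/-- X̃ is a diagonal:  [[1,0],[0,1]] or [[0,1],[1,0]]. -/
def patE (a b c d : Bool) : Prop :=
  (a = true ∧ d = true ∧ b = false ∧ c = false) ∨
  (b = true ∧ c = true ∧ a = false ∧ d = false)

/-- X̃ is all ones. -/
def patA (a b c d : Bool) : Prop := a = true ∧ b = true ∧ c = true ∧ d = true

/-- X̃ has exactly three 1's. -/
def patB (a b c d : Bool) : Prop := a.toNat + b.toNat + c.toNat + d.toNat = 3

/-- X̃ has exactly one 1. -/
def patZ (a b c d : Bool) : Prop := a.toNat + b.toNat + c.toNat + d.toNat = 1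

/-- X̃ is all zeros. -/
def patH (a b c d : Bool) : Prop := a = false ∧ b = false ∧ c = false ∧ d = false

namespace Rec3

open Finset

instance (n k : ℕ) : DecidablePred (isLambda n k) := fun A => by
  unfold isLambda; infer_instance

instance (a b c d : Bool) : Decidable (patA a b c d) := by unfold patA; infer_instance
instance (a b c d : Bool) : Decidable (patB a b c d) := by unfold patB; infer_instance
instance (a b c d : Bool) : Decidable (patΓ a b c d) := by unfold patΓ; infer_instance
instance (a b c d : Bool) : Decidable (patΔ a b c d) := by unfold patΔ; infer_instance
instance (a b c d : Bool) : Decidable (patE a b c d) := by unfold patE; infer_instance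
instance (a b c d : Bool) : Decidable (patZ a b c d) := by unfold patZ; infer_instance
instance (a b c d : Bool) : Decidable (patH a b c d) := by unfold patH; infer_instance

instance (n : ℕ) (h : 0 < n) (X : Fin n → Fin n → Bool)
    (P : Bool → Bool → Bool → Bool → Prop) [∀ a b c d, Decidable (P a b c d)] :
    Decidable (tildePattern n h X P) := by
  unfold tildePattern; infer_instance

/-- number of all-zero diagonals of the 2×2 matrix [[a,b],[c,d]] -/
def zval (a b c d : Bool) : ℕ :=
  (if a = false ∧ d = false then 1 else 0) + (if b = false ∧ c = false then 1 else 0)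

lemma pat_exhaust : ∀ a b c d : Bool, patA a b c d ∨ patB a b c d ∨ patΓ a b c d ∨
    patΔ a b c d ∨ patE a b c d ∨ patZ a b c d ∨ patH a b c d := by decide

lemma exclB : ∀ a b c d : Bool, patB a b c d → ¬ patA a b c d := by decide
lemma exclΓ : ∀ a b c d : Bool, patΓ a b c d → ¬ patA a b c d ∧ ¬ patB a b c d := by decide
lemma exclΔ : ∀ a b c d : Bool, patΔ a b c d →
    ¬ patA a b c d ∧ ¬ patB a b c d ∧ ¬ patΓ a b c d := by decide
lemma exclE : ∀ a b c d : Bool, patE a b c d →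
    ¬ patA a b c d ∧ ¬ patB a b c d ∧ ¬ patΓ a b c d ∧ ¬ patΔ a b c d := by decide
lemma exclZ : ∀ a b c d : Bool, patZ a b c d → ¬ patA a b c d ∧ ¬ patB a b c d ∧
    ¬ patΓ a b c d ∧ ¬ patΔ a b c d ∧ ¬ patE a b c d := by decide
lemma exclH : ∀ a b c d : Bool, patH a b c d → ¬ patA a b c d ∧ ¬ patB a b c d ∧
    ¬ patΓ a b c d ∧ ¬ patΔ a b c d ∧ ¬ patE a b c d ∧ ¬ patZ a b c d := by decide

lemma zval_patA : ∀ a b c d : Bool, patA a b c d → zval a b c d = 0 := by decide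
lemma zval_patB : ∀ a b c d : Bool, patB a b c d → zval a b c d = 0 := by decide
lemma zval_patΓ : ∀ a b c d : Bool, patΓ a b c d → zval a b c d = 0 := by decide
lemma zval_patΔ : ∀ a b c d : Bool, patΔ a b c d → zval a b c d = 0 := by decide
lemma zval_patE : ∀ a b c d : Bool, patE a b c d → zval a b c d = 1 := by decide
lemma zval_patZ : ∀ a b c d : Bool, patZ a b c d → zval a b c d = 1 := by decide
lemma zval_patH : ∀ a b c d : Bool, patH a b c d → zval a b c d = 2 := by decide

lemma ncard_eq {n : ℕ} (p : (Fin n → Fin n → Bool) → Prop) [DecidablePred p] :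
    {X | p X}.ncard = (univ.filter p).card := by
  rw [Set.ncard_eq_toFinset_card']
  congr 1
  ext X
  simp

lemma lam_eq (m k : ℕ) : lam m k = (univ.filter (isLambda m k)).card := by
  rw [lam, Nat.card_eq_fintype_card, Fintype.card_subtype]

lemma lamPos_eq (n k : ℕ) (h : 0 < n) :
    lamPos n k h = (univ.filter (fun X => isLambda n k X ∧
      X (lastIdx n h) (lastIdx n h) = true)).card := by
  rw [lamPos, Nat.card_eq_fintype_card, Fintype.card_subtype]

lemma lastIdx_eq (m : ℕ) (h : 0 < m + 1) : lastIdx (m+1) h = Fin.last m := rfl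

end Rec3

namespace Rec3
open Finset

lemma two_of_filter {m : ℕ} (f : Fin (m+1) → Bool)
    (h3 : (univ.filter fun i => f i = true).card = 3) (hl : f (Fin.last m) = true) :
    ∃ s t : Fin (m+1), s < t ∧ s ≠ Fin.last m ∧ t ≠ Fin.last m ∧
      (univ.filter fun i => f i = true) = {s, t, Fin.last m} := by
  set F := univ.filter fun i => f i = true with hF
  have hmem : Fin.last m ∈ F := mem_filter.mpr ⟨mem_univ _, hl⟩
  have he : (F.erase (Fin.last m)).card = 2 := by
    rw [card_erase_of_mem hmem, h3]
  obtain ⟨a, b, hab, hE⟩ := card_eq_two.mp he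
  have ha : a ≠ Fin.last m := by
    have : a ∈ F.erase (Fin.last m) := by rw [hE]; simp
    exact (mem_erase.mp this).1
  have hb : b ≠ Fin.last m := by
    have : b ∈ F.erase (Fin.last m) := by rw [hE]; simp
    exact (mem_erase.mp this).1
  have key : F = insert (Fin.last m) {a, b} := by
    rw [← hE, insert_erase hmem]
  rcases hab.lt_or_gt with h | h
  · refine ⟨a, b, h, ha, hb, ?_⟩
    rw [key]; ext x; simp; tauto
  · refine ⟨b, a, h, hb, ha, ?_⟩
    rw [key]; ext x; simp; tauto

lemma canon {m : ℕ} (X : Fin (m+1) → Fin (m+1) → Bool)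
    (hX : isLambda (m+1) 3 X) (hc : X (Fin.last m) (Fin.last m) = true) :
    ∃ s t p q : Fin (m+1), s < t ∧ p < q ∧ s ≠ Fin.last m ∧ t ≠ Fin.last m ∧
      p ≠ Fin.last m ∧ q ≠ Fin.last m ∧
      (univ.filter fun i => X i (Fin.last m) = true) = {s, t, Fin.last m} ∧
      (univ.filter fun j => X (Fin.last m) j = true) = {p, q, Fin.last m} ∧
      ∀ (h : 0 < m+1) (P : Bool → Bool → Bool → Bool → Prop),
        tildePattern (m+1) h X P ↔ P (X s p) (X s q) (X t p) (X t q) := by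
  obtain ⟨s, t, hst, hs, ht, hrow⟩ := two_of_filter (fun i => X i (Fin.last m)) (hX.2 _) hc
  obtain ⟨p, q, hpq, hp, hq, hcol⟩ := two_of_filter (fun j => X (Fin.last m) j) (hX.1 _) hc
  have hXs : X s (Fin.last m) = true := by
    have : s ∈ ({s, t, Fin.last m} : Finset _) := by simp
    rw [← hrow] at this; exact (mem_filter.mp this).2
  have hXt : X t (Fin.last m) = true := by
    have : t ∈ ({s, t, Fin.last m} : Finset _) := by simp
    rw [← hrow] at this; exact (mem_filter.mp this).2
  have hXp : X (Fin.last m) p = true := by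
    have : p ∈ ({p, q, Fin.last m} : Finset _) := by simp
    rw [← hcol] at this; exact (mem_filter.mp this).2
  have hXq : X (Fin.last m) q = true := by
    have : q ∈ ({p, q, Fin.last m} : Finset _) := by simp
    rw [← hcol] at this; exact (mem_filter.mp this).2
  refine ⟨s, t, p, q, hst, hpq, hs, ht, hp, hq, hrow, hcol, fun h P => ?_⟩
  constructor
  · rintro ⟨s₁, t₁, p₁, q₁, hst₁, hpq₁, hs₁, ht₁, hp₁, hq₁, h1, h2, h3, h4, hP⟩
    simp only [lastIdx_eq] at h1 h2 h3 h4
    have ms₁ : s₁ = s ∨ s₁ = t := by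
      have : s₁ ∈ ({s, t, Fin.last m} : Finset _) := by
        rw [← hrow]; exact mem_filter.mpr ⟨mem_univ _, h1⟩
      simp at this; tauto
    have mt₁ : t₁ = s ∨ t₁ = t := by
      have : t₁ ∈ ({s, t, Fin.last m} : Finset _) := by
        rw [← hrow]; exact mem_filter.mpr ⟨mem_univ _, h2⟩
      simp at this; tauto
    have mp₁ : p₁ = p ∨ p₁ = q := by
      have : p₁ ∈ ({p, q, Fin.last m} : Finset _) := by
        rw [← hcol]; exact mem_filter.mpr ⟨mem_univ _, h3⟩
      simp at this; tauto
    have mq₁ : q₁ = p ∨ q₁ = q := by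
      have : q₁ ∈ ({p, q, Fin.last m} : Finset _) := by
        rw [← hcol]; exact mem_filter.mpr ⟨mem_univ _, h4⟩
      simp at this; tauto
    have es : s₁ = s ∧ t₁ = t := by
      rcases ms₁ with rfl | rfl <;> rcases mt₁ with rfl | rfl
      · exact absurd hst₁ (lt_irrefl _)
      · exact ⟨rfl, rfl⟩
      · exact absurd hst (lt_asymm hst₁)
      · exact absurd hst₁ (lt_irrefl _)
    have ep : p₁ = p ∧ q₁ = q := by
      rcases mp₁ with rfl | rfl <;> rcases mq₁ with rfl | rfl
      · exact absurd hpq₁ (lt_irrefl _)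
      · exact ⟨rfl, rfl⟩
      · exact absurd hpq (lt_asymm hpq₁)
      · exact absurd hpq₁ (lt_irrefl _)
    rw [es.1, es.2, ep.1, ep.2] at hP
    exact hP
  · intro hP
    exact ⟨s, t, p, q, hst, hpq, hs, ht, hp, hq, hXs, hXt, hXp, hXq, hP⟩

end Rec3

namespace Rec3
open Finset

def Lp (m : ℕ) : Finset (Fin (m+1) → Fin (m+1) → Bool) :=
  univ.filter (fun X => isLambda (m+1) 3 X ∧ X (Fin.last m) (Fin.last m) = true)

def Lm (m : ℕ) : Finset (Fin m → Fin m → Bool) := univ.filter (isLambda m 3)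

lemma mem_Lp {m : ℕ} {X : Fin (m+1) → Fin (m+1) → Bool} (hX : X ∈ Lp m) :
    isLambda (m+1) 3 X ∧ X (Fin.last m) (Fin.last m) = true :=
  (mem_filter.mp hX).2

lemma mem_Lp_iff {m : ℕ} {X : Fin (m+1) → Fin (m+1) → Bool} :
    X ∈ Lp m ↔ isLambda (m+1) 3 X ∧ X (Fin.last m) (Fin.last m) = true := by
  simp [Lp]

lemma canonLp {m : ℕ} {X : Fin (m+1) → Fin (m+1) → Bool} (hX : X ∈ Lp m) :
    ∃ a b c d : Bool, ∀ (h : 0 < m+1) (P : Bool → Bool → Bool → Bool → Prop),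
      tildePattern (m+1) h X P ↔ P a b c d := by
  obtain ⟨s, t, p, q, _, _, _, _, _, _, _, _, hiff⟩ := canon X (mem_Lp hX).1 (mem_Lp hX).2
  exact ⟨_, _, _, _, fun h P => hiff h P⟩

lemma tp_not {m : ℕ} {X : Fin (m+1) → Fin (m+1) → Bool} (hX : X ∈ Lp m)
    (h h' : 0 < m+1) {P Q : Bool → Bool → Bool → Bool → Prop}
    (hPQ : ∀ a b c d, P a b c d → ¬ Q a b c d) :
    tildePattern (m+1) h X P → ¬ tildePattern (m+1) h' X Q := by
  obtain ⟨a, b, c, d, hi⟩ := canonLp hX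
  rw [hi h P, hi h' Q]
  exact hPQ a b c d

lemma split_step {α : Type*} (s : Finset α) (C P : α → Prop)
    [DecidablePred C] [DecidablePred P] (f : α → ℕ)
    (hPC : ∀ x ∈ s, P x → C x) :
    ∑ x ∈ s.filter C, f x =
      ∑ x ∈ s.filter P, f x + ∑ x ∈ s.filter (fun x => C x ∧ ¬ P x), f x := by
  rw [← sum_filter_add_sum_filter_not (s.filter C) P f, filter_filter, filter_filter]
  congr 1
  apply Finset.sum_congr _ (fun _ _ => rfl)
  apply filter_congr
  intro x hx
  constructor
  · exact fun hh => hh.2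
  · exact fun hh => ⟨hPC x hx hh, hh⟩

lemma sum_split (m : ℕ) (h : 0 < m+1) (f : (Fin (m+1) → Fin (m+1) → Bool) → ℕ) :
    ∑ X ∈ Lp m, f X =
      ∑ X ∈ (Lp m).filter (fun X => tildePattern (m+1) h X patA), f X +
      (∑ X ∈ (Lp m).filter (fun X => tildePattern (m+1) h X patB), f X +
      (∑ X ∈ (Lp m).filter (fun X => tildePattern (m+1) h X patΓ), f X +
      (∑ X ∈ (Lp m).filter (fun X => tildePattern (m+1) h X patΔ), f X +
      (∑ X ∈ (Lp m).filter (fun X => tildePattern (m+1) h X patE), f X +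
      (∑ X ∈ (Lp m).filter (fun X => tildePattern (m+1) h X patZ), f X +
      ∑ X ∈ (Lp m).filter (fun X => tildePattern (m+1) h X patH), f X))))) := by
  have eA : ∑ X ∈ Lp m, f X =
      ∑ X ∈ (Lp m).filter (fun X => tildePattern (m+1) h X patA), f X +
      ∑ X ∈ (Lp m).filter (fun X => ¬ tildePattern (m+1) h X patA), f X :=
    (sum_filter_add_sum_filter_not _ _ f).symm
  have eB := split_step (Lp m)
      (fun X => ¬ tildePattern (m+1) h X patA)
      (fun X => tildePattern (m+1) h X patB) f
      (fun X hX hP => tp_not hX h h (fun a b c d hb => exclB a b c d hb) hP)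
  have eΓ := split_step (Lp m)
      (fun X => (¬ tildePattern (m+1) h X patA) ∧ ¬ tildePattern (m+1) h X patB)
      (fun X => tildePattern (m+1) h X patΓ) f
      (fun X hX hP => ⟨
        tp_not hX h h (fun a b c d hb => (exclΓ a b c d hb).1) hP,
        tp_not hX h h (fun a b c d hb => (exclΓ a b c d hb).2) hP⟩)
  have eΔ := split_step (Lp m)
      (fun X => ((¬ tildePattern (m+1) h X patA) ∧ ¬ tildePattern (m+1) h X patB) ∧
        ¬ tildePattern (m+1) h X patΓ)
      (fun X => tildePattern (m+1) h X patΔ) f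
      (fun X hX hP => ⟨⟨
        tp_not hX h h (fun a b c d hb => (exclΔ a b c d hb).1) hP,
        tp_not hX h h (fun a b c d hb => (exclΔ a b c d hb).2.1) hP⟩,
        tp_not hX h h (fun a b c d hb => (exclΔ a b c d hb).2.2) hP⟩)
  have eE := split_step (Lp m)
      (fun X => (((¬ tildePattern (m+1) h X patA) ∧ ¬ tildePattern (m+1) h X patB) ∧
        ¬ tildePattern (m+1) h X patΓ) ∧ ¬ tildePattern (m+1) h X patΔ)
      (fun X => tildePattern (m+1) h X patE) f
      (fun X hX hP => ⟨⟨⟨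
        tp_not hX h h (fun a b c d hb => (exclE a b c d hb).1) hP,
        tp_not hX h h (fun a b c d hb => (exclE a b c d hb).2.1) hP⟩,
        tp_not hX h h (fun a b c d hb => (exclE a b c d hb).2.2.1) hP⟩,
        tp_not hX h h (fun a b c d hb => (exclE a b c d hb).2.2.2) hP⟩)
  have eZ := split_step (Lp m)
      (fun X => ((((¬ tildePattern (m+1) h X patA) ∧ ¬ tildePattern (m+1) h X patB) ∧
        ¬ tildePattern (m+1) h X patΓ) ∧ ¬ tildePattern (m+1) h X patΔ) ∧
        ¬ tildePattern (m+1) h X patE)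
      (fun X => tildePattern (m+1) h X patZ) f
      (fun X hX hP => ⟨⟨⟨⟨
        tp_not hX h h (fun a b c d hb => (exclZ a b c d hb).1) hP,
        tp_not hX h h (fun a b c d hb => (exclZ a b c d hb).2.1) hP⟩,
        tp_not hX h h (fun a b c d hb => (exclZ a b c d hb).2.2.1) hP⟩,
        tp_not hX h h (fun a b c d hb => (exclZ a b c d hb).2.2.2.1) hP⟩,
        tp_not hX h h (fun a b c d hb => (exclZ a b c d hb).2.2.2.2) hP⟩)
  have eH : (Lp m).filter
      (fun X => (((((¬ tildePattern (m+1) h X patA) ∧ ¬ tildePattern (m+1) h X patB) ∧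
        ¬ tildePattern (m+1) h X patΓ) ∧ ¬ tildePattern (m+1) h X patΔ) ∧
        ¬ tildePattern (m+1) h X patE) ∧ ¬ tildePattern (m+1) h X patZ) =
      (Lp m).filter (fun X => tildePattern (m+1) h X patH) := by
    apply filter_congr
    intro X hX
    obtain ⟨a, b, c, d, hi⟩ := canonLp hX
    simp only [hi h patA, hi h patB, hi h patΓ, hi h patΔ, hi h patE, hi h patZ, hi h patH,
      eq_iff_iff]
    clear hi hX
    revert a b c d
    decide
  rw [eA, eB, eΓ, eΔ, eE, eZ, eH]

lemma patGD : ∀ a b c d : Bool, patΓ a b c d → patΔ a c b d := by decide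
lemma patDG : ∀ a b c d : Bool, patΔ a b c d → patΓ a c b d := by decide

lemma tr_mem {m : ℕ} {X : Fin (m+1) → Fin (m+1) → Bool} (hX : X ∈ Lp m) :
    (fun i j => X j i) ∈ Lp m := by
  rw [mem_Lp_iff] at hX ⊢
  exact ⟨⟨hX.1.2, hX.1.1⟩, hX.2⟩

lemma tr_tp {m : ℕ} {X : Fin (m+1) → Fin (m+1) → Bool} (h : 0 < m+1)
    {P Q : Bool → Bool → Bool → Bool → Prop}
    (hPQ : ∀ a b c d, P a b c d → Q a c b d) :
    tildePattern (m+1) h X P → tildePattern (m+1) h (fun i j => X j i) Q := by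
  rintro ⟨s, t, p, q, hst, hpq, hs, ht, hp, hq, h1, h2, h3, h4, hP⟩
  exact ⟨p, q, s, t, hpq, hst, hp, hq, hs, ht, h3, h4, h1, h2, hPQ _ _ _ _ hP⟩

lemma card_Γ_eq_Δ (m : ℕ) (h : 0 < m+1) :
    ((Lp m).filter (fun X => tildePattern (m+1) h X patΓ)).card =
    ((Lp m).filter (fun X => tildePattern (m+1) h X patΔ)).card := by
  apply Finset.card_nbij' (fun X => fun i j => X j i) (fun X => fun i j => X j i)
  · intro X hX
    rw [mem_coe, mem_filter] at hX ⊢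
    exact ⟨tr_mem hX.1, tr_tp h patGD hX.2⟩
  · intro X hX
    rw [mem_coe, mem_filter] at hX ⊢
    exact ⟨tr_mem hX.1, tr_tp h patDG hX.2⟩
  · intro X _; rfl
  · intro X _; rfl

end Rec3

namespace Rec3
open Finset

def ones {m : ℕ} (Y : Fin m → Fin m → Bool) : Finset (Fin m × Fin m) :=
  univ.filter fun e => Y e.1 e.2 = true

lemma row_ones_card {m : ℕ} (Y : Fin m → Fin m → Bool) (i : Fin m) :
    ((ones Y).filter fun e => e.1 = i).card = (univ.filter fun j => Y i j = true).card := by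
  apply Finset.card_nbij' (fun e => e.2) (fun j => (i, j))
  · rintro ⟨a, b⟩ he
    simp only [ones, mem_coe, mem_filter, mem_univ, true_and] at he ⊢
    rw [← he.2]; exact he.1
  · intro j hj
    simp only [ones, mem_coe, mem_filter, mem_univ, true_and] at hj ⊢
    exact ⟨hj, trivial⟩
  · rintro ⟨a, b⟩ he
    simp only [ones, mem_coe, mem_filter] at he
    rw [← he.2]
  · intro j _; rfl

lemma col_ones_card {m : ℕ} (Y : Fin m → Fin m → Bool) (j : Fin m) :
    ((ones Y).filter fun e => e.2 = j).card = (univ.filter fun i => Y i j = true).card := by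
  apply Finset.card_nbij' (fun e => e.1) (fun i => (i, j))
  · rintro ⟨a, b⟩ he
    simp only [ones, mem_coe, mem_filter, mem_univ, true_and] at he ⊢
    rw [← he.2]; exact he.1
  · intro i hi
    simp only [ones, mem_coe, mem_filter, mem_univ, true_and] at hi ⊢
    exact ⟨hi, trivial⟩
  · rintro ⟨a, b⟩ he
    simp only [ones, mem_coe, mem_filter] at he
    rw [← he.2]
  · intro i _; rfl

lemma card_ones {m : ℕ} {Y : Fin m → Fin m → Bool} (hY : isLambda m 3 Y) :
    (ones Y).card = 3 * m := by
  rw [card_eq_sum_card_fiberwise (f := Prod.fst) (t := univ) (fun x _ => mem_univ _)]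
  have : ∀ i : Fin m, ((ones Y).filter fun e => e.1 = i).card = 3 := by
    intro i; rw [row_ones_card, hY.1 i]
  rw [Finset.sum_congr rfl (fun i _ => this i), Finset.sum_const, card_univ,
    Fintype.card_fin, smul_eq_mul, mul_comm]

lemma gen_count {m : ℕ} {Y : Fin m → Fin m → Bool} (hY : isLambda m 3 Y)
    {e : Fin m × Fin m} (he : e ∈ ones Y) :
    ((ones Y).filter fun e' => e.1 ≠ e'.1 ∧ e.2 ≠ e'.2).card = 3 * m - 5 := by
  have hsplit := card_filter_add_card_filter_not
    (s := ones Y) (p := fun e' => e'.1 = e.1 ∨ e'.2 = e.2)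
  rw [card_ones hY] at hsplit
  have h5 : ((ones Y).filter fun e' => e'.1 = e.1 ∨ e'.2 = e.2).card = 5 := by
    rw [filter_or]
    have hu := card_union_add_card_inter ((ones Y).filter fun e' => e'.1 = e.1)
      ((ones Y).filter fun e' => e'.2 = e.2)
    rw [← filter_and] at hu
    have hA : ((ones Y).filter fun e' => e'.1 = e.1).card = 3 := by
      rw [row_ones_card, hY.1]
    have hB : ((ones Y).filter fun e' => e'.2 = e.2).card = 3 := by
      rw [col_ones_card, hY.2]
    have hI : ((ones Y).filter fun e' => e'.1 = e.1 ∧ e'.2 = e.2).card = 1 := by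
      have : ((ones Y).filter fun e' => e'.1 = e.1 ∧ e'.2 = e.2) =
          (ones Y).filter fun e' => e' = e := by
        apply filter_congr; intro x _
        rw [Prod.ext_iff]
      rw [this, filter_eq', if_pos he, card_singleton]
    omega
  have hcongr : ((ones Y).filter fun e' => ¬ (e'.1 = e.1 ∨ e'.2 = e.2)) =
      (ones Y).filter fun e' => e.1 ≠ e'.1 ∧ e.2 ≠ e'.2 := by
    apply filter_congr; intro x _
    constructor
    · intro hx; push_neg at hx; exact ⟨fun hh => hx.1 hh.symm, fun hh => hx.2 hh.symm⟩
    · intro hx; push_neg; exact ⟨fun hh => (hx.1 hh.symm).elim, fun hh => (hx.2 hh.symm).elim⟩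
  rw [hcongr] at hsplit
  omega

def gp {m : ℕ} (Y : Fin m → Fin m → Bool) :
    Finset ((Fin m × Fin m) × (Fin m × Fin m)) :=
  univ.filter fun ee => Y ee.1.1 ee.1.2 = true ∧ Y ee.2.1 ee.2.2 = true ∧
    ee.1.1 ≠ ee.2.1 ∧ ee.1.2 ≠ ee.2.2

lemma card_gp {m : ℕ} {Y : Fin m → Fin m → Bool} (hY : isLambda m 3 Y) :
    (gp Y).card = 3 * m * (3 * m - 5) := by
  have hmaps : ∀ ee ∈ gp Y, Prod.fst ee ∈ ones Y := by
    rintro ⟨e, e'⟩ hee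
    simp only [gp, mem_filter, mem_univ, true_and] at hee
    simp only [ones, mem_filter, mem_univ, true_and]
    exact hee.1
  rw [card_eq_sum_card_fiberwise hmaps]
  have hfib : ∀ e ∈ ones Y, ((gp Y).filter fun ee => ee.1 = e).card = 3 * m - 5 := by
    intro e he
    rw [← gen_count hY he]
    apply Finset.card_nbij' (fun ee => ee.2) (fun e' => (e, e'))
    · rintro ⟨a, b⟩ hab
      simp only [gp, mem_coe, mem_filter, mem_univ, true_and] at hab
      obtain ⟨⟨h1, h2, h3, h4⟩, rfl⟩ := hab
      simp only [ones, mem_coe, mem_filter, mem_univ, true_and]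
      exact ⟨h2, h3, h4⟩
    · intro e' he'
      simp only [ones, mem_coe, mem_filter, mem_univ, true_and] at he'
      simp only [gp, mem_coe, mem_filter, mem_univ, true_and]
      have heY : Y e.1 e.2 = true := by
        simpa only [ones, mem_filter, mem_univ, true_and] using he
      exact ⟨⟨heY, he'.1, he'.2.1, he'.2.2⟩, trivial⟩
    · rintro ⟨a, b⟩ hab
      simp only [gp, mem_coe, mem_filter] at hab
      rw [← hab.2]
    · intro e' _; rfl
  rw [Finset.sum_congr rfl hfib, Finset.sum_const, card_ones hY, smul_eq_mul]

def S1 (m : ℕ) : Finset ((Fin m → Fin m → Bool) × ((Fin m × Fin m) × (Fin m × Fin m))) :=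
  univ.filter fun Z => isLambda m 3 Z.1 ∧ Z.1 Z.2.1.1 Z.2.1.2 = true ∧
    Z.1 Z.2.2.1 Z.2.2.2 = true ∧ Z.2.1.1 ≠ Z.2.2.1 ∧ Z.2.1.2 ≠ Z.2.2.2

lemma card_S1 (m : ℕ) : (S1 m).card = (Lm m).card * (3 * m * (3 * m - 5)) := by
  have hmaps : ∀ Z ∈ S1 m, Prod.fst Z ∈ Lm m := by
    intro Z hZ
    simp only [S1, mem_filter, mem_univ, true_and] at hZ
    simp only [Lm, mem_filter, mem_univ, true_and]
    exact hZ.1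
  rw [card_eq_sum_card_fiberwise hmaps]
  have hfib : ∀ Y ∈ Lm m, ((S1 m).filter fun Z => Z.1 = Y).card = 3 * m * (3 * m - 5) := by
    intro Y hY
    have hYl : isLambda m 3 Y := by
      simpa only [Lm, mem_filter, mem_univ, true_and] using hY
    rw [← card_gp hYl]
    apply Finset.card_nbij' (fun Z => Z.2) (fun ee => (Y, ee))
    · rintro ⟨W, ee⟩ hZ
      simp only [S1, mem_coe, mem_filter, mem_univ, true_and] at hZ
      obtain ⟨⟨h1, h2, h3, h4, h5⟩, rfl⟩ := hZ
      simp only [gp, mem_coe, mem_filter, mem_univ, true_and]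
      exact ⟨h2, h3, h4, h5⟩
    · intro ee hee
      simp only [gp, mem_coe, mem_filter, mem_univ, true_and] at hee
      simp only [S1, mem_coe, mem_filter, mem_univ, true_and]
      exact ⟨⟨hYl, hee.1, hee.2.1, hee.2.2.1, hee.2.2.2⟩, trivial⟩
    · rintro ⟨W, ee⟩ hZ
      simp only [S1, mem_coe, mem_filter] at hZ
      rw [← hZ.2]
    · intro ee _; rfl
  rw [Finset.sum_congr rfl hfib, Finset.sum_const, smul_eq_mul]

end Rec3

namespace Rec3
open Finset

def border {m : ℕ} (Y : Fin m → Fin m → Bool) (e e' : Fin m × Fin m) :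
    Fin (m+1) → Fin (m+1) → Bool := fun i j =>
  if hi : i = Fin.last m then
    if hj : j = Fin.last m then true
    else decide (j.castPred hj = e.2 ∨ j.castPred hj = e'.2)
  else
    if hj : j = Fin.last m then decide (i.castPred hi = e.1 ∨ i.castPred hi = e'.1)
    else if (i.castPred hi, j.castPred hj) = e ∨ (i.castPred hi, j.castPred hj) = e'
      then false else Y (i.castPred hi) (j.castPred hj)

lemma castSucc_ne_last {m : ℕ} (i : Fin m) : i.castSucc ≠ Fin.last m :=
  (Fin.castSucc_lt_last i).ne

lemma border_corner {m : ℕ} (Y : Fin m → Fin m → Bool) (e e' : Fin m × Fin m) :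
    border Y e e' (Fin.last m) (Fin.last m) = true := by
  simp [border]

lemma border_lastcol {m : ℕ} (Y : Fin m → Fin m → Bool) (e e' : Fin m × Fin m) (i : Fin m) :
    border Y e e' i.castSucc (Fin.last m) = decide (i = e.1 ∨ i = e'.1) := by
  by_cases h1 : i = e.1 <;> by_cases h2 : i = e'.1 <;>
    simp [border, castSucc_ne_last i, h1, h2]

lemma border_lastrow {m : ℕ} (Y : Fin m → Fin m → Bool) (e e' : Fin m × Fin m) (j : Fin m) :
    border Y e e' (Fin.last m) j.castSucc = decide (j = e.2 ∨ j = e'.2) := by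
  by_cases h1 : j = e.2 <;> by_cases h2 : j = e'.2 <;>
    simp [border, castSucc_ne_last j, h1, h2]

lemma border_int {m : ℕ} (Y : Fin m → Fin m → Bool) (e e' : Fin m × Fin m) (i j : Fin m) :
    border Y e e' i.castSucc j.castSucc =
      if (i, j) = e ∨ (i, j) = e' then false else Y i j := by
  by_cases h1 : (i, j) = e <;> by_cases h2 : (i, j) = e' <;>
    simp [border, castSucc_ne_last i, castSucc_ne_last j, h1, h2]

lemma card_filter_succ {m : ℕ} (f : Fin (m+1) → Bool) :
    (univ.filter fun j => f j = true).card =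
      (univ.filter fun j : Fin m => f j.castSucc = true).card +
        (if f (Fin.last m) = true then 1 else 0) := by
  rw [card_filter, card_filter, Fin.sum_univ_castSucc]

lemma border_tr {m : ℕ} (Y : Fin m → Fin m → Bool) (e e' : Fin m × Fin m)
    (i j : Fin (m+1)) :
    border (fun a b => Y b a) e.swap e'.swap i j = border Y e e' j i := by
  by_cases hi : i = Fin.last m <;> by_cases hj : j = Fin.last m
  · subst hi; subst hj; simp [border]
  · subst hi; simp [border, hj]
  · subst hj; simp [border, hi]
  · have hcond : ((i.castPred hi, j.castPred hj) = e.swap ∨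
        (i.castPred hi, j.castPred hj) = e'.swap) ↔
        ((j.castPred hj, i.castPred hi) = e ∨ (j.castPred hj, i.castPred hi) = e') := by
      simp only [Prod.ext_iff, Prod.swap]
      tauto
    simp only [border, dif_neg hi, dif_neg hj, hcond]

lemma border_rows {m : ℕ} {Y : Fin m → Fin m → Bool} {e e' : Fin m × Fin m}
    (hY : isLambda m 3 Y) (h1 : Y e.1 e.2 = true) (h2 : Y e'.1 e'.2 = true)
    (hr : e.1 ≠ e'.1) (hc : e.2 ≠ e'.2) :
    ∀ i : Fin (m+1), (univ.filter fun j => border Y e e' i j = true).card = 3 := by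
  intro i
  induction i using Fin.lastCases with
  | last =>
    rw [card_filter_succ]
    have h2' : (univ.filter fun j : Fin m => border Y e e' (Fin.last m) j.castSucc = true) =
        ({e.2, e'.2} : Finset (Fin m)) := by
      ext j
      simp [border_lastrow]
    rw [h2', border_corner, if_pos rfl, card_insert_of_notMem (by simp [hc]), card_singleton]
  | cast i' =>
    rw [card_filter_succ, border_lastcol]
    by_cases hA : i' = e.1
    · have hB : i' ≠ e'.1 := fun hh => hr (hA ▸ hh ▸ rfl)
      have hint : (univ.filter fun j : Fin m => border Y e e' i'.castSucc j.castSucc = true) =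
          (univ.filter fun j => Y i' j = true).erase e.2 := by
        ext j
        simp only [border_int, mem_filter, mem_univ, true_and, mem_erase, Prod.ext_iff]
        subst hA
        by_cases hj : j = e.2
        · subst hj
          simp [hr]
        · have : ¬ (((e.1 : Fin m) = e.1 ∧ j = e.2) ∨ ((e.1 : Fin m) = e'.1 ∧ j = e'.2)) := by
            rintro (⟨_, h⟩ | ⟨h, _⟩)
            · exact hj h
            · exact hr h
          simp [if_neg this, hj, hr]
      rw [hint, card_erase_of_mem (by simp [hA ▸ h1]), hY.1 i']
      subst hA
      simp
    · by_cases hB : i' = e'.1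
      · have hint : (univ.filter fun j : Fin m => border Y e e' i'.castSucc j.castSucc = true) =
            (univ.filter fun j => Y i' j = true).erase e'.2 := by
          ext j
          simp only [border_int, mem_filter, mem_univ, true_and, mem_erase, Prod.ext_iff]
          subst hB
          by_cases hj : j = e'.2
          · subst hj
            simp [hA, Ne.symm hr]
          · have : ¬ (((e'.1 : Fin m) = e.1 ∧ j = e.2) ∨ ((e'.1 : Fin m) = e'.1 ∧ j = e'.2)) := by
              rintro (⟨h, _⟩ | ⟨_, h⟩)
              · exact hr h.symm
              · exact hj h
            simp [if_neg this, hj, Ne.symm hr]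
        rw [hint, card_erase_of_mem (by simp [hB ▸ h2]), hY.1 i']
        subst hB
        simp [hA]
      · have hint : (univ.filter fun j : Fin m => border Y e e' i'.castSucc j.castSucc = true) =
            univ.filter fun j => Y i' j = true := by
          ext j
          simp only [border_int, mem_filter, mem_univ, true_and, Prod.ext_iff]
          have : ¬ ((i' = e.1 ∧ j = e.2) ∨ (i' = e'.1 ∧ j = e'.2)) := by
            rintro (⟨h, _⟩ | ⟨h, _⟩)
            · exact hA h
            · exact hB h
          simp [if_neg this]
        rw [hint, hY.1 i']
        simp [hA, hB]

lemma border_cols {m : ℕ} {Y : Fin m → Fin m → Bool} {e e' : Fin m × Fin m}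
    (hY : isLambda m 3 Y) (h1 : Y e.1 e.2 = true) (h2 : Y e'.1 e'.2 = true)
    (hr : e.1 ≠ e'.1) (hc : e.2 ≠ e'.2) :
    ∀ j : Fin (m+1), (univ.filter fun i => border Y e e' i j = true).card = 3 := by
  intro j
  have := border_rows (Y := fun a b => Y b a) (e := e.swap) (e' := e'.swap)
    ⟨hY.2, hY.1⟩ h1 h2 hc hr j
  rw [← this]
  congr 1
  apply filter_congr
  intro i _
  rw [border_tr]

lemma border_mem {m : ℕ} {Y : Fin m → Fin m → Bool} {e e' : Fin m × Fin m}
    (hY : isLambda m 3 Y) (h1 : Y e.1 e.2 = true) (h2 : Y e'.1 e'.2 = true)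
    (hr : e.1 ≠ e'.1) (hc : e.2 ≠ e'.2) :
    border Y e e' ∈ Lp m := by
  rw [mem_Lp_iff]
  exact ⟨⟨border_rows hY h1 h2 hr hc, border_cols hY h1 h2 hr hc⟩, border_corner Y e e'⟩

end Rec3

namespace Rec3
open Finset

def modif {m : ℕ} (X : Fin (m+1) → Fin (m+1) → Bool) (e e' : Fin m × Fin m) :
    Fin m → Fin m → Bool := fun i j =>
  if (i, j) = e ∨ (i, j) = e' then true else X i.castSucc j.castSucc

lemma modif_comm {m : ℕ} (X : Fin (m+1) → Fin (m+1) → Bool) (e e' : Fin m × Fin m) :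
    modif X e e' = modif X e' e := by
  funext i j
  simp [modif, or_comm]

lemma border_comm {m : ℕ} (Y : Fin m → Fin m → Bool) (e e' : Fin m × Fin m) :
    border Y e e' = border Y e' e := by
  funext i j
  unfold border
  by_cases hi : i = Fin.last m <;> by_cases hj : j = Fin.last m <;>
    simp [hi, hj, or_comm]

lemma modif_tr {m : ℕ} (X : Fin (m+1) → Fin (m+1) → Bool) (e e' : Fin m × Fin m)
    (i j : Fin m) :
    modif (fun a b => X b a) e.swap e'.swap i j = modif X e e' j i := by
  have hcond : ((i, j) = e.swap ∨ (i, j) = e'.swap) ↔ ((j, i) = e ∨ (j, i) = e') := by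
    simp only [Prod.ext_iff, Prod.swap]
    tauto
  simp only [modif, hcond]

lemma mem_triple_filter {m : ℕ} {f : Fin (m+1) → Bool} {u w : Fin (m+1)}
    (hrow : univ.filter (fun i => f i = true) = {u, w, Fin.last m}) :
    f u = true ∧ f w = true ∧ f (Fin.last m) = true ∧
      (∀ i : Fin m, i.castSucc ≠ u → i.castSucc ≠ w → f i.castSucc = false) := by
  have hmem : ∀ z, z ∈ ({u, w, Fin.last m} : Finset (Fin (m+1))) → f z = true := by
    intro z hz
    rw [← hrow] at hz
    exact (mem_filter.mp hz).2
  refine ⟨hmem u (by simp), hmem w (by simp), hmem (Fin.last m) (by simp), ?_⟩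
  intro i h1 h2
  by_contra hcon
  rw [Bool.not_eq_false] at hcon
  have : i.castSucc ∈ ({u, w, Fin.last m} : Finset (Fin (m+1))) := by
    rw [← hrow]; exact mem_filter.mpr ⟨mem_univ _, hcon⟩
  simp only [mem_insert, mem_singleton] at this
  rcases this with h | h | h
  · exact h1 h
  · exact h2 h
  · exact castSucc_ne_last i h

lemma modif_rows {m : ℕ} {X : Fin (m+1) → Fin (m+1) → Bool}
    {u w v x : Fin (m+1)} (hu : u ≠ Fin.last m) (hw : w ≠ Fin.last m)
    (hv : v ≠ Fin.last m) (hx : x ≠ Fin.last m)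
    (huw : u ≠ w)
    (hL : ∀ i, (univ.filter fun j => X i j = true).card = 3)
    (hrow : univ.filter (fun i => X i (Fin.last m) = true) = {u, w, Fin.last m})
    (hXuv : X u v = false) (hXwx : X w x = false) :
    ∀ i : Fin m, (univ.filter fun j => modif X (u.castPred hu, v.castPred hv)
      (w.castPred hw, x.castPred hx) i j = true).card = 3 := by
  obtain ⟨hul, hwl, _, hother⟩ := mem_triple_filter hrow
  intro i
  have hcs : ∀ (z : Fin (m+1)) (hz : z ≠ Fin.last m), (z.castPred hz).castSucc = z := by
    intro z hz; simp
  by_cases hA : i = u.castPred hu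
  · have hiu : i.castSucc = u := by rw [hA]; simp
    have hne : u.castPred hu ≠ w.castPred hw := by
      intro hcon
      apply huw
      rw [← hcs u hu, ← hcs w hw, hcon]
    have hset : (univ.filter fun j => modif X (u.castPred hu, v.castPred hv)
        (w.castPred hw, x.castPred hx) i j = true) =
        insert (v.castPred hv) (univ.filter fun j : Fin m => X u j.castSucc = true) := by
      ext j
      simp only [modif, mem_filter, mem_univ, true_and, mem_insert, Prod.ext_iff, hA]
      by_cases hj : j = v.castPred hv
      · simp [hj]
      · have hcond : ¬ ((u.castPred hu = u.castPred hu ∧ j = v.castPred hv) ∨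
            (u.castPred hu = w.castPred hw ∧ j = x.castPred hx)) := by
          rintro (⟨_, hh⟩ | ⟨hh, _⟩)
          · exact hj hh
          · exact hne hh
        simp [if_neg hcond, hj, hiu, hcs u hu, hne]
    rw [hset, card_insert_of_notMem]
    · have hbase := card_filter_succ (fun j => X u j)
      rw [hL u, hul, if_pos rfl] at hbase
      omega
    · simp only [mem_filter, mem_univ, true_and]
      rw [hcs v hv, hXuv]
      simp
  · by_cases hB : i = w.castPred hw
    · have hiw : i.castSucc = w := by rw [hB]; simp
      have hne : w.castPred hw ≠ u.castPred hu := by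
        intro hcon
        apply huw
        rw [← hcs u hu, ← hcs w hw, hcon]
      have hset : (univ.filter fun j => modif X (u.castPred hu, v.castPred hv)
          (w.castPred hw, x.castPred hx) i j = true) =
          insert (x.castPred hx) (univ.filter fun j : Fin m => X w j.castSucc = true) := by
        ext j
        simp only [modif, mem_filter, mem_univ, true_and, mem_insert, Prod.ext_iff, hB]
        by_cases hj : j = x.castPred hx
        · simp [hj]
        · have hcond : ¬ ((w.castPred hw = u.castPred hu ∧ j = v.castPred hv) ∨
              (w.castPred hw = w.castPred hw ∧ j = x.castPred hx)) := by
            rintro (⟨hh, _⟩ | ⟨_, hh⟩)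
            · exact hne hh
            · exact hj hh
          simp [if_neg hcond, hj, hiw, hcs w hw, hne]
      rw [hset, card_insert_of_notMem]
      · have hbase := card_filter_succ (fun j => X w j)
        rw [hL w, hwl, if_pos rfl] at hbase
        omega
      · simp only [mem_filter, mem_univ, true_and]
        rw [hcs x hx, hXwx]
        simp
    · have hiu : i.castSucc ≠ u := by
        intro hcon; apply hA
        exact Fin.castSucc_injective _ (by rw [hcon]; simp)
      have hiw : i.castSucc ≠ w := by
        intro hcon; apply hB
        exact Fin.castSucc_injective _ (by rw [hcon]; simp)
      have hset : (univ.filter fun j => modif X (u.castPred hu, v.castPred hv)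
          (w.castPred hw, x.castPred hx) i j = true) =
          univ.filter fun j : Fin m => X i.castSucc j.castSucc = true := by
        ext j
        simp only [modif, mem_filter, mem_univ, true_and, Prod.ext_iff]
        have hcond : ¬ ((i = u.castPred hu ∧ j = v.castPred hv) ∨
            (i = w.castPred hw ∧ j = x.castPred hx)) := by
          rintro (⟨hh, _⟩ | ⟨hh, _⟩)
          · exact hA hh
          · exact hB hh
        simp [if_neg hcond]
      rw [hset]
      have hbase := card_filter_succ (fun j => X i.castSucc j)
      rw [hL i.castSucc, hother i hiu hiw, if_neg (by simp)] at hbase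
      omega

lemma modif_cols {m : ℕ} {X : Fin (m+1) → Fin (m+1) → Bool}
    {u w v x : Fin (m+1)} (hu : u ≠ Fin.last m) (hw : w ≠ Fin.last m)
    (hv : v ≠ Fin.last m) (hx : x ≠ Fin.last m)
    (hvx : v ≠ x)
    (hL : ∀ j, (univ.filter fun i => X i j = true).card = 3)
    (hcol : univ.filter (fun j => X (Fin.last m) j = true) = {v, x, Fin.last m})
    (hXuv : X u v = false) (hXwx : X w x = false) :
    ∀ j : Fin m, (univ.filter fun i => modif X (u.castPred hu, v.castPred hv)
      (w.castPred hw, x.castPred hx) i j = true).card = 3 := by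
  intro j
  have := modif_rows (X := fun a b => X b a) hv hx hu hw hvx hL hcol hXuv hXwx j
  rw [← this]
  congr 1
  apply filter_congr
  intro i _
  have := modif_tr X (u.castPred hu, v.castPred hv) (w.castPred hw, x.castPred hx) j i
  simp only [Prod.swap] at this
  rw [← this]

lemma recover_border {m : ℕ} {X : Fin (m+1) → Fin (m+1) → Bool}
    {u w v x : Fin (m+1)} (hu : u ≠ Fin.last m) (hw : w ≠ Fin.last m)
    (hv : v ≠ Fin.last m) (hx : x ≠ Fin.last m)
    (huw : u ≠ w) (hvx : v ≠ x)
    (hrow : univ.filter (fun i => X i (Fin.last m) = true) = {u, w, Fin.last m})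
    (hcol : univ.filter (fun j => X (Fin.last m) j = true) = {v, x, Fin.last m})
    (hXuv : X u v = false) (hXwx : X w x = false) :
    border (modif X (u.castPred hu, v.castPred hv) (w.castPred hw, x.castPred hx))
      (u.castPred hu, v.castPred hv) (w.castPred hw, x.castPred hx) = X := by
  obtain ⟨hul, hwl, hll, hotherR⟩ := mem_triple_filter hrow
  obtain ⟨hvl, hxl, _, hotherC⟩ := mem_triple_filter hcol
  funext i j
  induction i using Fin.lastCases with
  | last =>
    induction j using Fin.lastCases with
    | last => rw [border_corner, hll]
    | cast j' =>
      rw [border_lastrow]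
      by_cases hj : j' = v.castPred hv ∨ j' = x.castPred hx
      · rcases hj with hj | hj
        · subst hj
          simp [hvl]
        · subst hj
          simp [hxl]
      · push_neg at hj
        have h1 : j'.castSucc ≠ v := by
          intro hcon; apply hj.1
          exact Fin.castSucc_injective _ (by rw [hcon]; simp)
        have h2 : j'.castSucc ≠ x := by
          intro hcon; apply hj.2
          exact Fin.castSucc_injective _ (by rw [hcon]; simp)
        rw [hotherC j' h1 h2]
        simp [hj.1, hj.2]
  | cast i' =>
    induction j using Fin.lastCases with
    | last =>
      rw [border_lastcol]
      by_cases hi : i' = u.castPred hu ∨ i' = w.castPred hw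
      · rcases hi with hi | hi
        · subst hi
          simp [hul]
        · subst hi
          simp [hwl]
      · push_neg at hi
        have h1 : i'.castSucc ≠ u := by
          intro hcon; apply hi.1
          exact Fin.castSucc_injective _ (by rw [hcon]; simp)
        have h2 : i'.castSucc ≠ w := by
          intro hcon; apply hi.2
          exact Fin.castSucc_injective _ (by rw [hcon]; simp)
        rw [hotherR i' h1 h2]
        simp [hi.1, hi.2]
    | cast j' =>
      rw [border_int]
      by_cases hc : (i', j') = (u.castPred hu, v.castPred hv) ∨
          (i', j') = (w.castPred hw, x.castPred hx)
      · rw [if_pos hc]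
        rcases hc with hc | hc
        · rw [Prod.mk.injEq] at hc
          rw [hc.1, hc.2]
          simp [hXuv]
        · rw [Prod.mk.injEq] at hc
          rw [hc.1, hc.2]
          simp [hXwx]
      · rw [if_neg hc]
        simp only [modif, if_neg hc]
end Rec3

namespace Rec3
open Finset

lemma fiber_card {m : ℕ} {X : Fin (m+1) → Fin (m+1) → Bool} (hX : X ∈ Lp m) :
    ∃ a b c d : Bool,
      (∀ (h : 0 < m+1) (P : Bool → Bool → Bool → Bool → Prop),
        tildePattern (m+1) h X P ↔ P a b c d) ∧
      ((S1 m).filter fun Z => border Z.1 Z.2.1 Z.2.2 = X).card =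
        2 * zval a b c d := by
  obtain ⟨s, t, p, q, hst, hpq, hs, ht, hp, hq, hrow, hcol, hiff⟩ :=
    canon X (mem_Lp hX).1 (mem_Lp hX).2
  have hL := (mem_Lp hX).1
  refine ⟨X s p, X s q, X t p, X t q, hiff, ?_⟩
  have hcs : ∀ (z : Fin (m+1)) (hz : z ≠ Fin.last m), (z.castPred hz).castSucc = z := by
    intro z hz; simp
  have hst' : s.castPred hs ≠ t.castPred ht := by
    intro hcon; exact hst.ne (by rw [← hcs s hs, ← hcs t ht, hcon])
  have hpq' : p.castPred hp ≠ q.castPred hq := by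
    intro hcon; exact hpq.ne (by rw [← hcs p hp, ← hcs q hq, hcon])
  have hcol' : univ.filter (fun j => X (Fin.last m) j = true) = {q, p, Fin.last m} := by
    rw [hcol]; ext z; simp; tauto
  have hset : ((S1 m).filter fun Z => border Z.1 Z.2.1 Z.2.2 = X) =
      ((if X s p = false ∧ X t q = false then
          ({(modif X (s.castPred hs, p.castPred hp) (t.castPred ht, q.castPred hq),
              ((s.castPred hs, p.castPred hp), (t.castPred ht, q.castPred hq))),
            (modif X (s.castPred hs, p.castPred hp) (t.castPred ht, q.castPred hq),
              ((t.castPred ht, q.castPred hq), (s.castPred hs, p.castPred hp)))} :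
            Finset ((Fin m → Fin m → Bool) × ((Fin m × Fin m) × (Fin m × Fin m)))) else ∅) ∪
      (if X s q = false ∧ X t p = false then
          ({(modif X (s.castPred hs, q.castPred hq) (t.castPred ht, p.castPred hp),
              ((s.castPred hs, q.castPred hq), (t.castPred ht, p.castPred hp))),
            (modif X (s.castPred hs, q.castPred hq) (t.castPred ht, p.castPred hp),
              ((t.castPred ht, p.castPred hp), (s.castPred hs, q.castPred hq)))} :
            Finset ((Fin m → Fin m → Bool) × ((Fin m × Fin m) × (Fin m × Fin m)))) else ∅)) := by
    ext Z
    obtain ⟨Y, e, e'⟩ := Z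
    simp only [mem_filter, S1, mem_univ, true_and]
    constructor
    · rintro ⟨⟨hYL, hYe, hYe', hne1, hne2⟩, hb⟩
      have hXr1 : e.1.castSucc = s ∨ e.1.castSucc = t := by
        have h1 : X e.1.castSucc (Fin.last m) = true := by
          rw [← hb, border_lastcol]; simp
        have hm : e.1.castSucc ∈ ({s, t, Fin.last m} : Finset _) := by
          rw [← hrow]; exact mem_filter.mpr ⟨mem_univ _, h1⟩
        simp only [mem_insert, mem_singleton] at hm
        rcases hm with h | h | h
        · exact Or.inl h
        · exact Or.inr h
        · exact absurd h (castSucc_ne_last _)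
      have hXr2 : e'.1.castSucc = s ∨ e'.1.castSucc = t := by
        have h1 : X e'.1.castSucc (Fin.last m) = true := by
          rw [← hb, border_lastcol]; simp
        have hm : e'.1.castSucc ∈ ({s, t, Fin.last m} : Finset _) := by
          rw [← hrow]; exact mem_filter.mpr ⟨mem_univ _, h1⟩
        simp only [mem_insert, mem_singleton] at hm
        rcases hm with h | h | h
        · exact Or.inl h
        · exact Or.inr h
        · exact absurd h (castSucc_ne_last _)
      have hXc1 : e.2.castSucc = p ∨ e.2.castSucc = q := by
        have h1 : X (Fin.last m) e.2.castSucc = true := by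
          rw [← hb, border_lastrow]; simp
        have hm : e.2.castSucc ∈ ({p, q, Fin.last m} : Finset _) := by
          rw [← hcol]; exact mem_filter.mpr ⟨mem_univ _, h1⟩
        simp only [mem_insert, mem_singleton] at hm
        rcases hm with h | h | h
        · exact Or.inl h
        · exact Or.inr h
        · exact absurd h (castSucc_ne_last _)
      have hXc2 : e'.2.castSucc = p ∨ e'.2.castSucc = q := by
        have h1 : X (Fin.last m) e'.2.castSucc = true := by
          rw [← hb, border_lastrow]; simp
        have hm : e'.2.castSucc ∈ ({p, q, Fin.last m} : Finset _) := by
          rw [← hcol]; exact mem_filter.mpr ⟨mem_univ _, h1⟩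
        simp only [mem_insert, mem_singleton] at hm
        rcases hm with h | h | h
        · exact Or.inl h
        · exact Or.inr h
        · exact absurd h (castSucc_ne_last _)
      have hYeq : Y = modif X e e' := by
        funext i j
        by_cases hcnd : (i, j) = e ∨ (i, j) = e'
        · simp only [modif, if_pos hcnd]
          rcases hcnd with h | h
          · rw [show i = e.1 from congrArg Prod.fst h, show j = e.2 from congrArg Prod.snd h]
            exact hYe
          · rw [show i = e'.1 from congrArg Prod.fst h, show j = e'.2 from congrArg Prod.snd h]
            exact hYe'
        · simp only [modif, if_neg hcnd]
          have hbi := border_int Y e e' i j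
          rw [hb] at hbi
          rw [hbi, if_neg hcnd]
      have hXee : X e.1.castSucc e.2.castSucc = false := by
        rw [← hb, border_int, if_pos (Or.inl (Prod.mk.eta))]
      have hXee' : X e'.1.castSucc e'.2.castSucc = false := by
        rw [← hb, border_int, if_pos (Or.inr (Prod.mk.eta))]
      rcases hXr1 with h1 | h1
      · have he1 : e.1 = s.castPred hs := Fin.castSucc_injective _ (by rw [h1]; simp)
        have he'1 : e'.1 = t.castPred ht := by
          rcases hXr2 with h2 | h2
          · exact absurd (Fin.castSucc_injective _ (h1.trans h2.symm)) hne1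
          · exact Fin.castSucc_injective _ (by rw [h2]; simp)
        have h2 : e'.1.castSucc = t := by rw [he'1]; simp
        rcases hXc1 with hc1 | hc1
        · have he2 : e.2 = p.castPred hp := Fin.castSucc_injective _ (by rw [hc1]; simp)
          have he'2 : e'.2 = q.castPred hq := by
            rcases hXc2 with hh | hh
            · exact absurd (Fin.castSucc_injective _ (hc1.trans hh.symm)) hne2
            · exact Fin.castSucc_injective _ (by rw [hh]; simp)
          have hcq : e'.2.castSucc = q := by rw [he'2]; simp
          have hXsp : X s p = false := by rw [← h1, ← hc1]; exact hXee
          have hXtq : X t q = false := by rw [← h2, ← hcq]; exact hXee'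
          have hee : e = (s.castPred hs, p.castPred hp) := Prod.ext_iff.mpr ⟨he1, he2⟩
          have hee' : e' = (t.castPred ht, q.castPred hq) := Prod.ext_iff.mpr ⟨he'1, he'2⟩
          subst hee hee'
          rw [hYeq]
          apply mem_union_left
          rw [if_pos ⟨hXsp, hXtq⟩]
          exact mem_insert_self _ _
        · have he2 : e.2 = q.castPred hq := Fin.castSucc_injective _ (by rw [hc1]; simp)
          have he'2 : e'.2 = p.castPred hp := by
            rcases hXc2 with hh | hh
            · exact Fin.castSucc_injective _ (by rw [hh]; simp)
            · exact absurd (Fin.castSucc_injective _ (hc1.trans hh.symm)) hne2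
          have hcp : e'.2.castSucc = p := by rw [he'2]; simp
          have hXsq : X s q = false := by rw [← h1, ← hc1]; exact hXee
          have hXtp : X t p = false := by rw [← h2, ← hcp]; exact hXee'
          have hee : e = (s.castPred hs, q.castPred hq) := Prod.ext_iff.mpr ⟨he1, he2⟩
          have hee' : e' = (t.castPred ht, p.castPred hp) := Prod.ext_iff.mpr ⟨he'1, he'2⟩
          subst hee hee'
          rw [hYeq]
          apply mem_union_right
          rw [if_pos ⟨hXsq, hXtp⟩]
          exact mem_insert_self _ _
      · have he1 : e.1 = t.castPred ht := Fin.castSucc_injective _ (by rw [h1]; simp)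
        have he'1 : e'.1 = s.castPred hs := by
          rcases hXr2 with h2 | h2
          · exact Fin.castSucc_injective _ (by rw [h2]; simp)
          · exact absurd (Fin.castSucc_injective _ (h1.trans h2.symm)) hne1
        have h2 : e'.1.castSucc = s := by rw [he'1]; simp
        rcases hXc1 with hc1 | hc1
        · have he2 : e.2 = p.castPred hp := Fin.castSucc_injective _ (by rw [hc1]; simp)
          have he'2 : e'.2 = q.castPred hq := by
            rcases hXc2 with hh | hh
            · exact absurd (Fin.castSucc_injective _ (hc1.trans hh.symm)) hne2
            · exact Fin.castSucc_injective _ (by rw [hh]; simp)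
          have hcq : e'.2.castSucc = q := by rw [he'2]; simp
          have hXtp : X t p = false := by rw [← h1, ← hc1]; exact hXee
          have hXsq : X s q = false := by rw [← h2, ← hcq]; exact hXee'
          have hee : e = (t.castPred ht, p.castPred hp) := Prod.ext_iff.mpr ⟨he1, he2⟩
          have hee' : e' = (s.castPred hs, q.castPred hq) := Prod.ext_iff.mpr ⟨he'1, he'2⟩
          subst hee hee'
          rw [hYeq, modif_comm X (t.castPred ht, p.castPred hp) (s.castPred hs, q.castPred hq)]
          apply mem_union_right
          rw [if_pos ⟨hXsq, hXtp⟩]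
          exact mem_insert_of_mem (mem_singleton_self _)
        · have he2 : e.2 = q.castPred hq := Fin.castSucc_injective _ (by rw [hc1]; simp)
          have he'2 : e'.2 = p.castPred hp := by
            rcases hXc2 with hh | hh
            · exact Fin.castSucc_injective _ (by rw [hh]; simp)
            · exact absurd (Fin.castSucc_injective _ (hc1.trans hh.symm)) hne2
          have hcp : e'.2.castSucc = p := by rw [he'2]; simp
          have hXtq : X t q = false := by rw [← h1, ← hc1]; exact hXee
          have hXsp : X s p = false := by rw [← h2, ← hcp]; exact hXee'
          have hee : e = (t.castPred ht, q.castPred hq) := Prod.ext_iff.mpr ⟨he1, he2⟩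
          have hee' : e' = (s.castPred hs, p.castPred hp) := Prod.ext_iff.mpr ⟨he'1, he'2⟩
          subst hee hee'
          rw [hYeq, modif_comm X (t.castPred ht, q.castPred hq) (s.castPred hs, p.castPred hp)]
          apply mem_union_left
          rw [if_pos ⟨hXsp, hXtq⟩]
          exact mem_insert_of_mem (mem_singleton_self _)
    · intro hmem
      rcases mem_union.mp hmem with hmem | hmem
      · by_cases hcond : X s p = false ∧ X t q = false
        · rw [if_pos hcond] at hmem
          have hlam : isLambda m 3 (modif X (s.castPred hs, p.castPred hp)
              (t.castPred ht, q.castPred hq)) :=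
            ⟨modif_rows hs ht hp hq hst.ne hL.1 hrow hcond.1 hcond.2,
             modif_cols hs ht hp hq hpq.ne hL.2 hcol hcond.1 hcond.2⟩
          have hbord := recover_border hs ht hp hq hst.ne hpq.ne hrow hcol hcond.1 hcond.2
          rcases mem_insert.mp hmem with h | h
          · have h1' := congrArg Prod.fst h
            have h2' := congrArg (fun z => z.2.1) h
            have h3' := congrArg (fun z => z.2.2) h
            simp only at h1' h2' h3'
            subst h1' h2' h3'
            exact ⟨⟨hlam, by simp [modif], by simp [modif], hst', hpq'⟩, hbord⟩
          · replace h := mem_singleton.mp h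
            have h1' := congrArg Prod.fst h
            have h2' := congrArg (fun z => z.2.1) h
            have h3' := congrArg (fun z => z.2.2) h
            simp only at h1' h2' h3'
            subst h1' h2' h3'
            refine ⟨⟨hlam, by simp [modif], by simp [modif], Ne.symm hst', Ne.symm hpq'⟩, ?_⟩
            rw [border_comm]
            exact hbord
        · rw [if_neg hcond] at hmem
          exact absurd hmem (notMem_empty _)
      · by_cases hcond : X s q = false ∧ X t p = false
        · rw [if_pos hcond] at hmem
          have hlam : isLambda m 3 (modif X (s.castPred hs, q.castPred hq)
              (t.castPred ht, p.castPred hp)) :=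
            ⟨modif_rows hs ht hq hp hst.ne hL.1 hrow hcond.1 hcond.2,
             modif_cols hs ht hq hp hpq.ne' hL.2 hcol' hcond.1 hcond.2⟩
          have hbord := recover_border hs ht hq hp hst.ne hpq.ne' hrow hcol' hcond.1 hcond.2
          rcases mem_insert.mp hmem with h | h
          · have h1' := congrArg Prod.fst h
            have h2' := congrArg (fun z => z.2.1) h
            have h3' := congrArg (fun z => z.2.2) h
            simp only at h1' h2' h3'
            subst h1' h2' h3'
            exact ⟨⟨hlam, by simp [modif], by simp [modif], hst', Ne.symm hpq'⟩, hbord⟩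
          · replace h := mem_singleton.mp h
            have h1' := congrArg Prod.fst h
            have h2' := congrArg (fun z => z.2.1) h
            have h3' := congrArg (fun z => z.2.2) h
            simp only at h1' h2' h3'
            subst h1' h2' h3'
            refine ⟨⟨hlam, by simp [modif], by simp [modif], Ne.symm hst', hpq'⟩, ?_⟩
            rw [border_comm]
            exact hbord
        · rw [if_neg hcond] at hmem
          exact absurd hmem (notMem_empty _)
  rw [hset]
  have hA12 : (modif X (s.castPred hs, p.castPred hp) (t.castPred ht, q.castPred hq),
      ((s.castPred hs, p.castPred hp), (t.castPred ht, q.castPred hq))) ≠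
      (modif X (s.castPred hs, p.castPred hp) (t.castPred ht, q.castPred hq),
      ((t.castPred ht, q.castPred hq), (s.castPred hs, p.castPred hp))) :=
    fun hcon => hst' (congrArg (fun z => z.2.1.1) hcon)
  have hB12 : (modif X (s.castPred hs, q.castPred hq) (t.castPred ht, p.castPred hp),
      ((s.castPred hs, q.castPred hq), (t.castPred ht, p.castPred hp))) ≠
      (modif X (s.castPred hs, q.castPred hq) (t.castPred ht, p.castPred hp),
      ((t.castPred ht, p.castPred hp), (s.castPred hs, q.castPred hq))) :=
    fun hcon => hst' (congrArg (fun z => z.2.1.1) hcon)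
  unfold zval
  by_cases h1 : X s p = false ∧ X t q = false <;>
    by_cases h2 : X s q = false ∧ X t p = false
  · have hdisj : Disjoint
        ({(modif X (s.castPred hs, p.castPred hp) (t.castPred ht, q.castPred hq),
            ((s.castPred hs, p.castPred hp), (t.castPred ht, q.castPred hq))),
          (modif X (s.castPred hs, p.castPred hp) (t.castPred ht, q.castPred hq),
            ((t.castPred ht, q.castPred hq), (s.castPred hs, p.castPred hp)))} :
          Finset ((Fin m → Fin m → Bool) × ((Fin m × Fin m) × (Fin m × Fin m))))
        ({(modif X (s.castPred hs, q.castPred hq) (t.castPred ht, p.castPred hp),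
            ((s.castPred hs, q.castPred hq), (t.castPred ht, p.castPred hp))),
          (modif X (s.castPred hs, q.castPred hq) (t.castPred ht, p.castPred hp),
            ((t.castPred ht, p.castPred hp), (s.castPred hs, q.castPred hq)))} :
          Finset ((Fin m → Fin m → Bool) × ((Fin m × Fin m) × (Fin m × Fin m)))) := by
      rw [Finset.disjoint_left]
      intro z hz hz'
      simp only [mem_insert, mem_singleton] at hz hz'
      rcases hz with rfl | rfl <;> rcases hz' with h | h
      · exact hpq' (congrArg (fun z => z.2.1.2) h)
      · exact hst' (congrArg (fun z => z.2.1.1) h)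
      · exact hst' (congrArg (fun z => z.2.1.1) h).symm
      · exact hpq' (congrArg (fun z => z.2.1.2) h).symm
    rw [if_pos h1, if_pos h2, if_pos h1, if_pos h2, card_union_of_disjoint hdisj,
      card_insert_of_notMem (by simp [hA12]), card_insert_of_notMem (by simp [hB12]),
      card_singleton, card_singleton]
  · rw [if_pos h1, if_neg h2, if_pos h1, if_neg h2, union_empty,
      card_insert_of_notMem (by simp [hA12]), card_singleton]
  · rw [if_neg h1, if_pos h2, if_neg h1, if_pos h2, empty_union,
      card_insert_of_notMem (by simp [hB12]), card_singleton]
  · rw [if_neg h1, if_neg h2, if_neg h1, if_neg h2, union_empty, card_empty]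

end Rec3

namespace Rec3
open Finset

lemma S1_count2 (m : ℕ) (h : 0 < m+1) :
    (S1 m).card =
      ((Lp m).filter (fun X => tildePattern (m+1) h X patA)).card * (2 * 0) +
      (((Lp m).filter (fun X => tildePattern (m+1) h X patB)).card * (2 * 0) +
      (((Lp m).filter (fun X => tildePattern (m+1) h X patΓ)).card * (2 * 0) +
      (((Lp m).filter (fun X => tildePattern (m+1) h X patΔ)).card * (2 * 0) +
      (((Lp m).filter (fun X => tildePattern (m+1) h X patE)).card * (2 * 1) +
      (((Lp m).filter (fun X => tildePattern (m+1) h X patZ)).card * (2 * 1) +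
      ((Lp m).filter (fun X => tildePattern (m+1) h X patH)).card * (2 * 2)))))) := by
  have hmaps : ∀ Z ∈ S1 m, border Z.1 Z.2.1 Z.2.2 ∈ Lp m := by
    intro Z hZ
    simp only [S1, mem_filter, mem_univ, true_and] at hZ
    exact border_mem hZ.1 hZ.2.1 hZ.2.2.1 hZ.2.2.2.1 hZ.2.2.2.2
  rw [card_eq_sum_card_fiberwise hmaps,
    sum_split m h (fun X => ((S1 m).filter fun Z => border Z.1 Z.2.1 Z.2.2 = X).card)]
  have key : ∀ (P : Bool → Bool → Bool → Bool → Prop)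
      [∀ a b c' d', Decidable (P a b c' d')] (c : ℕ),
      (∀ a b c' d', P a b c' d' → zval a b c' d' = c) →
      ∑ X ∈ (Lp m).filter (fun X => tildePattern (m+1) h X P),
        ((S1 m).filter fun Z => border Z.1 Z.2.1 Z.2.2 = X).card =
      ((Lp m).filter (fun X => tildePattern (m+1) h X P)).card * (2 * c) := by
    intro P _ c hPz
    have hval : ∀ X ∈ (Lp m).filter (fun X => tildePattern (m+1) h X P),
        ((S1 m).filter fun Z => border Z.1 Z.2.1 Z.2.2 = X).card = 2 * c := by
      intro X hX
      rw [mem_filter] at hX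
      obtain ⟨a, b, c', d', hiff, hcard⟩ := fiber_card hX.1
      rw [hcard, hPz a b c' d' ((hiff h P).mp hX.2)]
    rw [Finset.sum_congr rfl hval, Finset.sum_const, smul_eq_mul]
  rw [key patA 0 zval_patA, key patB 0 zval_patB, key patΓ 0 zval_patΓ,
    key patΔ 0 zval_patΔ, key patE 1 zval_patE, key patZ 1 zval_patZ,
    key patH 2 zval_patH]

lemma class_card (m : ℕ) (h : 0 < m+1) (P : Bool → Bool → Bool → Bool → Prop)
    [∀ a b c d, Decidable (P a b c d)] :
    {X : Fin (m+1) → Fin (m+1) → Bool | isLambda (m+1) 3 X ∧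
      X (lastIdx (m+1) h) (lastIdx (m+1) h) = true ∧ tildePattern (m+1) h X P}.ncard =
    ((Lp m).filter (fun X => tildePattern (m+1) h X P)).card := by
  rw [ncard_eq, Lp, filter_filter]
  congr 1
  apply filter_congr
  intro X _
  simp only [lastIdx_eq]
  tauto

end Rec3

/-- 2·λ⁺_{n,3} = 3(n−1)(3n−8)·λ_{n−1,3} + 2(αₙ + βₙ + 2γₙ − ηₙ), stated in ℤ. -/
theorem lamPos_three_rec (n : ℕ) (hn : 4 ≤ n) (h : 0 < n) :
    let α : ℕ := {X : Fin n → Fin n → Bool |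
      isLambda n 3 X ∧ X (lastIdx n h) (lastIdx n h) = true ∧ tildePattern n h X patA}.ncard
    let β : ℕ := {X : Fin n → Fin n → Bool |
      isLambda n 3 X ∧ X (lastIdx n h) (lastIdx n h) = true ∧ tildePattern n h X patB}.ncard
    let γ : ℕ := {X : Fin n → Fin n → Bool |
      isLambda n 3 X ∧ X (lastIdx n h) (lastIdx n h) = true ∧ tildePattern n h X patΓ}.ncard
    let η : ℕ := {X : Fin n → Fin n → Bool |
      isLambda n 3 X ∧ X (lastIdx n h) (lastIdx n h) = true ∧ tildePattern n h X patH}.ncard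
    2 * (lamPos n 3 h : ℤ) =
      3 * ((n : ℤ) - 1) * (3 * (n : ℤ) - 8) * (lam (n - 1) 3 : ℤ) +
        2 * ((α : ℤ) + (β : ℤ) + 2 * (γ : ℤ) - (η : ℤ)) := by
  obtain ⟨m, rfl⟩ : ∃ m, n = m + 1 := ⟨n - 1, by omega⟩
  intro α β γ η
  have hm : 3 ≤ m := by omega
  open Rec3 in
  have hα : α = ((Lp m).filter (fun X => tildePattern (m+1) h X patA)).card :=
    Rec3.class_card m h patA
  have hβ : β = ((Rec3.Lp m).filter (fun X => tildePattern (m+1) h X patB)).card :=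
    Rec3.class_card m h patB
  have hγ : γ = ((Rec3.Lp m).filter (fun X => tildePattern (m+1) h X patΓ)).card :=
    Rec3.class_card m h patΓ
  have hη : η = ((Rec3.Lp m).filter (fun X => tildePattern (m+1) h X patH)).card :=
    Rec3.class_card m h patH
  clear_value α β γ η
  have hlamPos : lamPos (m+1) 3 h = (Rec3.Lp m).card := by
    rw [Rec3.lamPos_eq]; rfl
  have hlam : lam (m+1-1) 3 = (Rec3.Lm m).card := by
    simp only [Nat.add_sub_cancel]
    rw [Rec3.lam_eq]; rfl
  have hpart := Rec3.sum_split m h (fun _ => 1)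
  simp only [Finset.sum_const, smul_eq_mul, mul_one] at hpart
  have hΓΔ := Rec3.card_Γ_eq_Δ m h
  have hS1 := (Rec3.card_S1 m).symm.trans (Rec3.S1_count2 m h)
  -- cast everything to ℤ
  have h5 : (5 : ℕ) ≤ 3 * m := by omega
  have key : ((Rec3.Lm m).card : ℤ) * (3 * (m : ℤ) * (3 * (m : ℤ) - 5)) =
      ((Rec3.Lp m).filter (fun X => tildePattern (m+1) h X patE)).card * 2 +
      ((Rec3.Lp m).filter (fun X => tildePattern (m+1) h X patZ)).card * 2 +
      ((Rec3.Lp m).filter (fun X => tildePattern (m+1) h X patH)).card * 4 := by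
    have h' := congrArg (Nat.cast : ℕ → ℤ) hS1
    push_cast [Nat.cast_sub h5] at h'
    linarith [h']
  have hΓΔ' : (((Rec3.Lp m).filter (fun X => tildePattern (m+1) h X patΔ)).card : ℤ) =
      (((Rec3.Lp m).filter (fun X => tildePattern (m+1) h X patΓ)).card : ℤ) := by
    exact_mod_cast hΓΔ.symm
  rw [hα, hβ, hγ, hη, hlamPos, hlam, hpart]
  push_cast
  linear_combination (-1 : ℤ) * key + 2 * hΓΔ'
end
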